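/- arXiv:1609.05879 — 6 statements merged into one kernel-verified Lean document; each statement's English description precedes it below -/
import Mathlib

section
/- Let T₁, T₂ > 0. For every t ∈ ℝ one has p(t) − p(t − T₂) − p(t − T₁) + p(t − T₂ − T₁) = A₁ ∫_{t−T₂}^{t} ∫_{σ−T₁}^{σ} p(τ) dτ dσ + A₂ ∫_{t−T₂}^{t} ( p(σ) − p(σ − T₁) ) dσ + B ∫_{t−T₂}^{t} ∫_{σ−T₁}^{σ} u(τ) dτ dσ. -/
open intervalIntegral

/-- For the second-order linear system `ṗ = q`, `q̇ = A₁ p + A₂ q + B u` (with `p, q`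
differentiable and `u` continuous), for every `T₁, T₂ > 0` and every `t ∈ ℝ`,
`p(t) − p(t−T₂) − p(t−T₁) + p(t−T₂−T₁) = A₁ ∫_{t−T₂}^{t} ∫_{σ−T₁}^{σ} p dτ dσ
 + A₂ ∫_{t−T₂}^{t} (p(σ) − p(σ−T₁)) dσ + B ∫_{t−T₂}^{t} ∫_{σ−T₁}^{σ} u dτ dσ`. -/
theorem integral_form_second_order {n m : ℕ}
    (A₁ A₂ : Matrix (Fin n) (Fin n) ℝ) (B : Matrix (Fin n) (Fin m) ℝ)
    (p q : ℝ → Fin n → ℝ) (u : ℝ → Fin m → ℝ)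
    (hp : ∀ t, HasDerivAt p (q t) t)
    (hq : ∀ t, HasDerivAt q (A₁.mulVec (p t) + A₂.mulVec (q t) + B.mulVec (u t)) t)
    (hu : Continuous u)
    (T₁ T₂ : ℝ) (hT₁ : 0 < T₁) (hT₂ : 0 < T₂) (t : ℝ) :
    p t - p (t - T₂) - p (t - T₁) + p (t - T₂ - T₁) =
      A₁.mulVec (∫ σ in (t - T₂)..t, ∫ τ in (σ - T₁)..σ, p τ) +
        A₂.mulVec (∫ σ in (t - T₂)..t, (p σ - p (σ - T₁))) +
          B.mulVec (∫ σ in (t - T₂)..t, ∫ τ in (σ - T₁)..σ, u τ) := by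
  -- continuous linear maps for the matrices
  set LA₁ : (Fin n → ℝ) →L[ℝ] (Fin n → ℝ) := LinearMap.toContinuousLinearMap A₁.mulVecLin with hLA₁
  set LA₂ : (Fin n → ℝ) →L[ℝ] (Fin n → ℝ) := LinearMap.toContinuousLinearMap A₂.mulVecLin with hLA₂
  set LB : (Fin m → ℝ) →L[ℝ] (Fin n → ℝ) := LinearMap.toContinuousLinearMap B.mulVecLin with hLB
  have hpc : Continuous p := continuous_iff_continuousAt.mpr fun x => (hp x).continuousAt
  have hqc : Continuous q := continuous_iff_continuousAt.mpr fun x => (hq x).continuousAt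
  have hshift : Continuous fun σ : ℝ => σ - T₁ := continuous_id.sub continuous_const
  -- derivative of σ ↦ p (σ - T₁)
  have hderiv : ∀ σ : ℝ, HasDerivAt (fun s => p (s - T₁)) (q (σ - T₁)) σ := by
    intro σ
    have := (hp (σ - T₁)).scomp σ ((hasDerivAt_id σ).sub_const T₁)
    simpa [Function.comp_def] using this
  -- RHS-of-ODE continuity
  have hrhs : Continuous fun τ => A₁.mulVec (p τ) + A₂.mulVec (q τ) + B.mulVec (u τ) := by
    exact ((LA₁.continuous.comp hpc).add (LA₂.continuous.comp hqc)).add (LB.continuous.comp hu)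
  -- FTC for q
  have FTCq : ∀ σ : ℝ, (∫ τ in (σ - T₁)..σ, (A₁.mulVec (p τ) + A₂.mulVec (q τ) + B.mulVec (u τ)))
      = q σ - q (σ - T₁) := fun σ =>
    intervalIntegral.integral_eq_sub_of_hasDerivAt (fun x _ => hq x) (hrhs.intervalIntegrable _ _)
  -- FTC for p
  have FTCp : ∀ a b : ℝ, (∫ τ in a..b, q τ) = p b - p a := fun a b =>
    intervalIntegral.integral_eq_sub_of_hasDerivAt (fun x _ => hp x) (hqc.intervalIntegrable _ _)
  -- continuity of sliding-window integrals
  have contInner : ∀ (k : ℕ) (f : ℝ → Fin k → ℝ), Continuous f →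
      Continuous (fun σ : ℝ => ∫ τ in (σ - T₁)..σ, f τ) := by
    intro k f hf
    have hprim : Continuous fun b : ℝ => ∫ τ in (0:ℝ)..b, f τ :=
      intervalIntegral.continuous_primitive (fun a b => hf.intervalIntegrable a b) 0
    have heq : (fun σ : ℝ => ∫ τ in (σ - T₁)..σ, f τ)
        = fun σ : ℝ => (∫ τ in (0:ℝ)..σ, f τ) - (∫ τ in (0:ℝ)..(σ - T₁), f τ) := by
      funext σ
      rw [eq_sub_iff_add_eq, add_comm]
      exact intervalIntegral.integral_add_adjacent_intervals
        (hf.intervalIntegrable _ _) (hf.intervalIntegrable _ _)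
    rw [heq]
    exact hprim.sub (hprim.comp hshift)
  have contIp := contInner n p hpc
  have contIu := contInner m u hu
  have contPdiff : Continuous fun σ : ℝ => p σ - p (σ - T₁) := hpc.sub (hpc.comp hshift)
  -- the key pointwise identity
  have key : ∀ σ : ℝ, q σ - q (σ - T₁)
      = A₁.mulVec (∫ τ in (σ - T₁)..σ, p τ) + A₂.mulVec (p σ - p (σ - T₁))
        + B.mulVec (∫ τ in (σ - T₁)..σ, u τ) := by
    intro σ
    rw [← FTCq σ]
    have h1 : (∫ τ in (σ - T₁)..σ, (A₁.mulVec (p τ) + A₂.mulVec (q τ) + B.mulVec (u τ)))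
        = (∫ τ in (σ - T₁)..σ, A₁.mulVec (p τ)) + (∫ τ in (σ - T₁)..σ, A₂.mulVec (q τ))
          + (∫ τ in (σ - T₁)..σ, B.mulVec (u τ)) := by
      rw [intervalIntegral.integral_add, intervalIntegral.integral_add]
      · exact ((LA₁.continuous.comp hpc).intervalIntegrable _ _)
      · exact ((LA₂.continuous.comp hqc).intervalIntegrable _ _)
      · exact (((LA₁.continuous.comp hpc).add (LA₂.continuous.comp hqc)).intervalIntegrable _ _)
      · exact ((LB.continuous.comp hu).intervalIntegrable _ _)
    rw [h1]
    have e1 : (∫ τ in (σ - T₁)..σ, A₁.mulVec (p τ)) = A₁.mulVec (∫ τ in (σ - T₁)..σ, p τ) :=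
      LA₁.intervalIntegral_comp_comm (hpc.intervalIntegrable _ _)
    have e2 : (∫ τ in (σ - T₁)..σ, A₂.mulVec (q τ)) = A₂.mulVec (∫ τ in (σ - T₁)..σ, q τ) :=
      LA₂.intervalIntegral_comp_comm (hqc.intervalIntegrable _ _)
    have e3 : (∫ τ in (σ - T₁)..σ, B.mulVec (u τ)) = B.mulVec (∫ τ in (σ - T₁)..σ, u τ) :=
      LB.intervalIntegral_comp_comm (hu.intervalIntegrable _ _)
    rw [e1, e2, e3, FTCp]
  -- outer FTC
  have houter : p t - p (t - T₁) - (p (t - T₂) - p (t - T₂ - T₁))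
      = ∫ σ in (t - T₂)..t, (q σ - q (σ - T₁)) := by
    refine (intervalIntegral.integral_eq_sub_of_hasDerivAt
      (f := fun σ => p σ - p (σ - T₁)) (fun σ _ => (hp σ).sub (hderiv σ)) ?_).symm
    exact ((hqc.sub (hqc.comp hshift)).intervalIntegrable _ _)
  have hLHS : p t - p (t - T₂) - p (t - T₁) + p (t - T₂ - T₁)
      = ∫ σ in (t - T₂)..t, (q σ - q (σ - T₁)) := by
    rw [← houter]; abel
  rw [hLHS]
  have hrw : (∫ σ in (t - T₂)..t, (q σ - q (σ - T₁)))
      = ∫ σ in (t - T₂)..t, (A₁.mulVec (∫ τ in (σ - T₁)..σ, p τ)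
          + A₂.mulVec (p σ - p (σ - T₁)) + B.mulVec (∫ τ in (σ - T₁)..σ, u τ)) := by
    congr 1; funext σ; exact key σ
  rw [hrw]
  have i1 : IntervalIntegrable (fun σ => A₁.mulVec (∫ τ in (σ - T₁)..σ, p τ))
      MeasureTheory.volume (t - T₂) t := (LA₁.continuous.comp contIp).intervalIntegrable _ _
  have i2 : IntervalIntegrable (fun σ => A₂.mulVec (p σ - p (σ - T₁)))
      MeasureTheory.volume (t - T₂) t := (LA₂.continuous.comp contPdiff).intervalIntegrable _ _
  have i3 : IntervalIntegrable (fun σ => B.mulVec (∫ τ in (σ - T₁)..σ, u τ))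
      MeasureTheory.volume (t - T₂) t := (LB.continuous.comp contIu).intervalIntegrable _ _
  rw [intervalIntegral.integral_add (i1.add i2) i3, intervalIntegral.integral_add i1 i2]
  congr 1
  · congr 1
    · exact LA₁.intervalIntegral_comp_comm (contIp.intervalIntegrable _ _)
    · exact LA₂.intervalIntegral_comp_comm (contPdiff.intervalIntegrable _ _)
  · exact LB.intervalIntegral_comp_comm (contIu.intervalIntegrable _ _)
end

section
/- Suppose θ̃ : ℝ → ℝᴺ is differentiable and satisfies θ̃'(t) = −k_θ Γ(t) 𝒢(t) θ̃(t), where Γ : ℝ → ℝ^{N×N} is differentiable, symmetric and invertible for all t, satisfies Γ̇(t) = β₁ Γ(t) − k_θ Γ(t) 𝒢(t) Γ(t), and 𝒢(t) ∈ ℝ^{N×N} is symmetric for all t. Then the function V_θ(t) := (1/2) θ̃(t)ᵀ Γ(t)⁻¹ θ̃(t) is differentiable with V_θ'(t) = −(k_θ/2) θ̃(t)ᵀ 𝒢(t) θ̃(t) − (β₁/2) θ̃(t)ᵀ Γ(t)⁻¹ θ̃(t). -/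
open scoped Matrix

attribute [local instance] Matrix.normedAddCommGroup Matrix.normedSpace

private lemma matDeriv_entry {N : ℕ} {M : ℝ → Matrix (Fin N) (Fin N) ℝ}
    {M' : Matrix (Fin N) (Fin N) ℝ} {t : ℝ}
    (h : HasDerivAt M M' t) (i j : Fin N) : HasDerivAt (fun s => M s i j) (M' i j) t :=
  hasDerivAt_pi.1 (hasDerivAt_pi.1 h i) j

private lemma matDeriv_of_entry {N : ℕ} {M : ℝ → Matrix (Fin N) (Fin N) ℝ}
    {M' : Matrix (Fin N) (Fin N) ℝ} {t : ℝ}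
    (h : ∀ i j, HasDerivAt (fun s => M s i j) (M' i j) t) : HasDerivAt M M' t :=
  hasDerivAt_pi.2 fun i => hasDerivAt_pi.2 (h i)

private lemma diffAt_det {N : ℕ} {M : ℝ → Matrix (Fin N) (Fin N) ℝ} {s : ℝ}
    (h : ∀ i j, DifferentiableAt ℝ (fun u => M u i j) s) :
    DifferentiableAt ℝ (fun u => (M u).det) s := by
  simp only [Matrix.det_apply']
  exact DifferentiableAt.fun_sum fun σ _ =>
    ((differentiableAt_const _).mul (DifferentiableAt.fun_finsetProd fun i _ => h (σ i) i))

private lemma mulVec_dot {N : ℕ} (M : Matrix (Fin N) (Fin N) ℝ) (x y : Fin N → ℝ) :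
    M.mulVec x ⬝ᵥ y = x ⬝ᵥ Mᵀ.mulVec y := by
  rw [dotProduct_comm, Matrix.dotProduct_mulVec, Matrix.mulVec_transpose,
    dotProduct_comm]

private lemma hasDerivAt_quadform {N : ℕ} {u v : ℝ → Fin N → ℝ}
    {M : ℝ → Matrix (Fin N) (Fin N) ℝ} {u' v' : Fin N → ℝ}
    {M' : Matrix (Fin N) (Fin N) ℝ} {t : ℝ}
    (hu : HasDerivAt u u' t) (hM : HasDerivAt M M' t) (hv : HasDerivAt v v' t) :
    HasDerivAt (fun s => u s ⬝ᵥ (M s).mulVec (v s))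
      (u' ⬝ᵥ (M t).mulVec (v t) + u t ⬝ᵥ M'.mulVec (v t) + u t ⬝ᵥ (M t).mulVec v') t := by
  have h : ∀ i, HasDerivAt (fun s => u s i * ∑ j, M s i j * v s j)
      (u' i * (∑ j, M t i j * v t j)
        + u t i * (∑ j, (M' i j * v t j + M t i j * v' j))) t := by
    intro i
    exact (hasDerivAt_pi.1 hu i).mul
      (HasDerivAt.fun_sum fun j _ =>
        ((matDeriv_entry hM i j).mul (hasDerivAt_pi.1 hv j)))
  have hsum := HasDerivAt.fun_sum (u := Finset.univ) fun i _ => h i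
  have heq1 : (fun s => u s ⬝ᵥ (M s).mulVec (v s))
      = fun s => ∑ i, u s i * ∑ j, M s i j * v s j := by
    funext s; simp [dotProduct, Matrix.mulVec]
  rw [heq1]
  refine hsum.congr_deriv ?_
  simp [dotProduct, Matrix.mulVec, Finset.sum_add_distrib, mul_add,
    Finset.mul_sum, add_assoc]

/-- If `θ̃' = −k_θ Γ 𝒢 θ̃` where `Γ` is differentiable, symmetric, invertible and satisfies
`Γ̇ = β₁ Γ − k_θ Γ 𝒢 Γ`, and `𝒢(t)` is symmetric, then
`V_θ(t) = (1/2) θ̃(t)ᵀ Γ(t)⁻¹ θ̃(t)` is differentiable with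
`V_θ'(t) = −(k_θ/2) θ̃(t)ᵀ 𝒢(t) θ̃(t) − (β₁/2) θ̃(t)ᵀ Γ(t)⁻¹ θ̃(t)`. -/
theorem deriv_Vtheta {N : ℕ}
    (θt : ℝ → Fin N → ℝ) (Γ 𝒢 : ℝ → Matrix (Fin N) (Fin N) ℝ) (β₁ kθ : ℝ)
    (hΓsymm : ∀ t, (Γ t).IsSymm) (hΓinv : ∀ t, IsUnit (Γ t))
    (hΓ : ∀ t, HasDerivAt Γ (β₁ • Γ t - kθ • (Γ t * 𝒢 t * Γ t)) t)
    (h𝒢symm : ∀ t, (𝒢 t).IsSymm)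
    (hθt : ∀ t, HasDerivAt θt (-(kθ • (Γ t).mulVec ((𝒢 t).mulVec (θt t)))) t) :
    ∀ t, HasDerivAt (fun s => (1 / 2) * (θt s ⬝ᵥ ((Γ s)⁻¹).mulVec (θt s)))
      (-(kθ / 2) * (θt t ⬝ᵥ (𝒢 t).mulVec (θt t))
        - (β₁ / 2) * (θt t ⬝ᵥ ((Γ t)⁻¹).mulVec (θt t))) t := by
  intro t
  have hdet : ∀ s, IsUnit (Γ s).det := fun s => (Matrix.isUnit_iff_isUnit_det _).1 (hΓinv s)
  have hGA : ∀ s, Γ s * (Γ s)⁻¹ = 1 := fun s => Matrix.mul_nonsing_inv _ (hdet s)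
  have hAG : ∀ s, (Γ s)⁻¹ * Γ s = 1 := fun s => Matrix.nonsing_inv_mul _ (hdet s)
  -- differentiability of entries of Γ
  have hΓdiff : ∀ s i j, DifferentiableAt ℝ (fun u => Γ u i j) s := fun s i j =>
    (matDeriv_entry (hΓ s) i j).differentiableAt
  -- differentiability of entries of Γ⁻¹
  have hAdiff : ∀ s i j, DifferentiableAt ℝ (fun u => (Γ u)⁻¹ i j) s := by
    intro s i j
    have heq : (fun u => (Γ u)⁻¹ i j)
        = fun u => ((Γ u).det)⁻¹ * ((Γ u).updateRow j (Pi.single i 1)).det := by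
      funext u
      rw [Matrix.inv_def, Matrix.smul_apply, Ring.inverse_eq_inv, Matrix.adjugate_apply,
        smul_eq_mul]
    rw [heq]
    have hd : DifferentiableAt ℝ (fun u => (Γ u).det) s := diffAt_det (hΓdiff s)
    have hd2 : DifferentiableAt ℝ (fun u => ((Γ u).updateRow j (Pi.single i 1)).det) s := by
      apply diffAt_det
      intro k l
      simp only [Matrix.updateRow_apply]
      by_cases hk : k = j
      · simp [hk]
      · simp only [hk, if_false]; exact hΓdiff s k l
    exact (hd.inv (hdet s).ne_zero).mul hd2
  -- HasDerivAt for Γ⁻¹ at t with abstract derivative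
  set D : Matrix (Fin N) (Fin N) ℝ :=
    Matrix.of (fun i j => deriv (fun u => (Γ u)⁻¹ i j) t) with hDdef
  have hA : HasDerivAt (fun u => (Γ u)⁻¹) D t :=
    matDeriv_of_entry fun i j => (hAdiff t i j).hasDerivAt
  -- derive the formula for D from Γ * Γ⁻¹ = 1
  have hprod : HasDerivAt (fun u => Γ u * (Γ u)⁻¹)
      ((β₁ • Γ t - kθ • (Γ t * 𝒢 t * Γ t)) * (Γ t)⁻¹ + Γ t * D) t := by
    apply matDeriv_of_entry
    intro i j
    have : ∀ u, (Γ u * (Γ u)⁻¹) i j = ∑ k, Γ u i k * (Γ u)⁻¹ k j := by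
      intro u; simp [Matrix.mul_apply]
    simp only [this]
    have := HasDerivAt.fun_sum (u := Finset.univ) fun k (_ : k ∈ Finset.univ) =>
      (matDeriv_entry (hΓ t) i k).mul (matDeriv_entry hA k j)
    refine this.congr_deriv ?_
    simp [Matrix.add_apply, Matrix.mul_apply, Finset.sum_add_distrib]
  have hconst : HasDerivAt (fun _ : ℝ => (1 : Matrix (Fin N) (Fin N) ℝ)) 0 t :=
    hasDerivAt_const _ _
  have hzero : (β₁ • Γ t - kθ • (Γ t * 𝒢 t * Γ t)) * (Γ t)⁻¹ + Γ t * D = 0 := by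
    have : (fun u => Γ u * (Γ u)⁻¹) = fun _ : ℝ => (1 : Matrix (Fin N) (Fin N) ℝ) := by
      funext u; exact hGA u
    rw [this] at hprod
    exact hprod.unique hconst
  have hD : D = kθ • 𝒢 t - β₁ • (Γ t)⁻¹ := by
    have h1 : Γ t * D = -((β₁ • Γ t - kθ • (Γ t * 𝒢 t * Γ t)) * (Γ t)⁻¹) := by
      exact eq_neg_iff_add_eq_zero.mpr (by rw [add_comm]; exact hzero)
    have h2 : D = (Γ t)⁻¹ * (Γ t * D) := by
      rw [← Matrix.mul_assoc, hAG, Matrix.one_mul]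
    rw [h2, h1]
    simp only [Matrix.mul_neg, Matrix.mul_sub, Matrix.sub_mul, Matrix.mul_smul,
      Matrix.smul_mul, Matrix.mul_assoc, hGA, Matrix.mul_one]
    rw [← Matrix.mul_assoc (Γ t)⁻¹ (Γ t), hAG, Matrix.one_mul]
    rw [neg_sub]
  -- symmetry of the inverse
  have hAsymm : ((Γ t)⁻¹)ᵀ = (Γ t)⁻¹ := by
    rw [Matrix.transpose_nonsing_inv]
    congr 1
    exact hΓsymm t
  -- main derivative computation
  have hmain := hasDerivAt_quadform (hθt t) hA (hθt t)
  have := hmain.const_mul (1/2 : ℝ)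
  refine this.congr_deriv ?_
  have hterm1 : (-(kθ • (Γ t).mulVec ((𝒢 t).mulVec (θt t)))) ⬝ᵥ ((Γ t)⁻¹).mulVec (θt t)
      = -(kθ * (θt t ⬝ᵥ (𝒢 t).mulVec (θt t))) := by
    rw [neg_dotProduct, smul_dotProduct, Matrix.mulVec_mulVec,
      mulVec_dot, Matrix.transpose_mul, (h𝒢symm t).eq, (hΓsymm t).eq,
      Matrix.mulVec_mulVec, Matrix.mul_assoc, hGA, Matrix.mul_one, smul_eq_mul]
  have hterm3 : θt t ⬝ᵥ ((Γ t)⁻¹).mulVec (-(kθ • (Γ t).mulVec ((𝒢 t).mulVec (θt t))))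
      = -(kθ * (θt t ⬝ᵥ (𝒢 t).mulVec (θt t))) := by
    rw [Matrix.mulVec_neg, dotProduct_neg, Matrix.mulVec_smul,
      dotProduct_smul, Matrix.mulVec_mulVec, Matrix.mulVec_mulVec,
      hAG, Matrix.one_mul, smul_eq_mul]
  have hterm2 : θt t ⬝ᵥ D.mulVec (θt t)
      = kθ * (θt t ⬝ᵥ (𝒢 t).mulVec (θt t)) - β₁ * (θt t ⬝ᵥ ((Γ t)⁻¹).mulVec (θt t)) := by
    rw [hD, Matrix.sub_mulVec, dotProduct_sub, Matrix.smul_mulVec,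
      dotProduct_smul, Matrix.smul_mulVec, dotProduct_smul,
      smul_eq_mul, smul_eq_mul]
  rw [hterm1, hterm3, hterm2]
  ring
end

section
/- (Lemma 1.) Suppose θ̃ : [t₀, ∞) → ℝᴺ is differentiable and satisfies θ̃'(t) = −k_θ Γ(t) 𝒢(t) θ̃(t), where k_θ > 0, β₁ ≥ 0, the matrices 𝒢(t) ∈ ℝ^{N×N} are symmetric positive semidefinite for all t, and Γ : [t₀, ∞) → ℝ^{N×N} is differentiable, symmetric, satisfies Γ̇(t) = β₁ Γ(t) − k_θ Γ(t) 𝒢(t) Γ(t), and satisfies γ̲ I ⪯ Γ(t) ⪯ γ̄ I for all t, with constants 0 < γ̲ ≤ γ̄. Then for all t ≥ t₀, ‖θ̃(t)‖ ≤ √( γ̄ · θ̃(t₀)ᵀ Γ(t₀)⁻¹ θ̃(t₀) ). -/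
open Set
attribute [local instance] Matrix.normedAddCommGroup Matrix.normedSpace

namespace PebAux
open Matrix
variable {N : ℕ}

noncomputable def eqv (N : ℕ) :
    Matrix (Fin N) (Fin N) ℝ ≃⋆ₐ[ℝ] (EuclideanSpace ℝ (Fin N) →L[ℝ] EuclideanSpace ℝ (Fin N)) :=
  Matrix.toEuclideanCLM (𝕜 := ℝ)

lemma clm_apply_eq (M : Matrix (Fin N) (Fin N) ℝ) (y : EuclideanSpace ℝ (Fin N)) (i : Fin N) :
    eqv N M y i = (M *ᵥ (WithLp.equiv 2 _ y)) i := by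
  have := Matrix.ofLp_toEuclideanCLM (𝕜 := ℝ) M y
  have h2 := congrFun this i
  exact h2

lemma toEuclideanLin_eq (M : Matrix (Fin N) (Fin N) ℝ) (y : EuclideanSpace ℝ (Fin N)) :
    Matrix.toEuclideanLin M y = eqv N M y := rfl

lemma inner_clm (M : Matrix (Fin N) (Fin N) ℝ) (x y : EuclideanSpace ℝ (Fin N)) :
    (inner ℝ x (eqv N M y) : ℝ) = (WithLp.equiv 2 _ x) ⬝ᵥ M *ᵥ (WithLp.equiv 2 _ y) := by
  rw [PiLp.inner_apply]
  simp only [RCLike.inner_apply, conj_trivial, clm_apply_eq]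
  exact Finset.sum_congr rfl fun _ _ => mul_comm _ _

lemma psd_inner_nonneg {M : Matrix (Fin N) (Fin N) ℝ} (hM : M.PosSemidef)
    (x : EuclideanSpace ℝ (Fin N)) : (0:ℝ) ≤ inner ℝ x (eqv N M x) := by
  rw [inner_clm]
  simpa using hM.dotProduct_mulVec_nonneg (WithLp.equiv 2 _ x)

lemma isHermitian_of_isSymm {M : Matrix (Fin N) (Fin N) ℝ} (hM : M.IsSymm) : M.IsHermitian := by
  rwa [Matrix.IsHermitian, conjTranspose_eq_transpose_of_trivial]

lemma isSymm_of_isHermitian {M : Matrix (Fin N) (Fin N) ℝ} (hM : M.IsHermitian) : M.IsSymm := by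
  rwa [Matrix.IsHermitian, conjTranspose_eq_transpose_of_trivial] at hM

lemma symm_inner_swap {M : Matrix (Fin N) (Fin N) ℝ} (hM : M.IsSymm)
    (x y : EuclideanSpace ℝ (Fin N)) :
    (inner ℝ (eqv N M x) y : ℝ) = inner ℝ x (eqv N M y) := by
  rw [real_inner_comm, inner_clm, inner_clm, Matrix.dotProduct_mulVec, ← Matrix.mulVec_transpose,
    hM.eq, dotProduct_comm]

lemma posDef_of_bounds {M : Matrix (Fin N) (Fin N) ℝ} {γlo : ℝ} (hγlo : 0 < γlo)
    (hsymm : M.IsSymm) (hlo : (M - γlo • (1 : Matrix (Fin N) (Fin N) ℝ)).PosSemidef) :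
    M.PosDef := by
  refine Matrix.PosDef.of_dotProduct_mulVec_pos (isHermitian_of_isSymm hsymm) fun x hx => ?_
  have h1 := hlo.dotProduct_mulVec_nonneg x
  have h2 : (0:ℝ) < dotProduct x x := by
    rcases lt_or_eq_of_le (dotProduct_self_star_nonneg (R := ℝ) x) with h | h
    · simpa using h
    · exact absurd (dotProduct_self_star_eq_zero.mp (by simpa using h.symm)) hx
  have : star x ⬝ᵥ (M - γlo • 1) *ᵥ x = star x ⬝ᵥ M *ᵥ x - γlo * (x ⬝ᵥ x) := by
    simp [Matrix.sub_mulVec, Matrix.smul_mulVec, dotProduct_sub, dotProduct_smul,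
      Matrix.one_mulVec, star_trivial]
  rw [this] at h1
  have := mul_pos hγlo h2
  simp only [star_trivial] at *
  linarith

lemma peb_unit {M : Matrix (Fin N) (Fin N) ℝ} (hM : M.PosDef) :
    ∃ u : (EuclideanSpace ℝ (Fin N) →L[ℝ] EuclideanSpace ℝ (Fin N))ˣ,
      (u : _) = eqv N M ∧ (↑u⁻¹ : _) = eqv N M⁻¹ := by
  have hdet : IsUnit M.det := (Matrix.isUnit_iff_isUnit_det M).mp hM.isUnit
  refine ⟨⟨eqv N M, eqv N M⁻¹, ?_, ?_⟩, rfl, rfl⟩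
  · rw [← _root_.map_mul, Matrix.mul_nonsing_inv M hdet, _root_.map_one]
  · rw [← _root_.map_mul, Matrix.nonsing_inv_mul M hdet, _root_.map_one]

lemma hasDerivWithinAt_ring_inverse_comp {R : Type*} [NormedRing R] [NormedAlgebra ℝ R]
    [CompleteSpace R] {A : ℝ → R} {A' : R} {s : Set ℝ} {t : ℝ}
    (u : Rˣ) (hu : (u : R) = A t) (hA : HasDerivWithinAt A A' s t) :
    HasDerivWithinAt (fun τ => Ring.inverse (A τ)) (-((↑u⁻¹ : R) * A' * (↑u⁻¹ : R))) s t := by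
  have h0 : HasFDerivAt Ring.inverse
      (-((ContinuousLinearMap.mulLeftRight ℝ R) ↑u⁻¹) ↑u⁻¹) (A t) := by
    rw [← hu]; exact hasFDerivAt_ringInverse (𝕜 := ℝ) u
  have h := h0.comp_hasDerivWithinAt t hA
  simpa [Function.comp_def] using h

noncomputable def eclm (N : ℕ) :
    Matrix (Fin N) (Fin N) ℝ →L[ℝ] (EuclideanSpace ℝ (Fin N) →L[ℝ] EuclideanSpace ℝ (Fin N)) :=
  LinearMap.toContinuousLinearMap
    { toFun := fun M => eqv N M
      map_add' := fun a b => map_add _ a b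
      map_smul' := fun c a => map_smul _ c a }

lemma eclm_apply (M : Matrix (Fin N) (Fin N) ℝ) : eclm N M = eqv N M := rfl

end PebAux

set_option synthInstance.maxHeartbeats 1000000 in
set_option maxHeartbeats 1000000 in
open PebAux in
/-- Lemma 1: if `θ̃' = −k_θ Γ 𝒢 θ̃` on `[t₀, ∞)` with `k_θ > 0`, `β₁ ≥ 0`, `𝒢(t)` symmetric
positive semidefinite, and `Γ` differentiable, symmetric, satisfying `Γ̇ = β₁ Γ − k_θ Γ 𝒢 Γ`
and `γ̲ I ⪯ Γ(t) ⪯ γ̄ I` with `0 < γ̲ ≤ γ̄`, then for all `t ≥ t₀`,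
`‖θ̃(t)‖ ≤ √(γ̄ · θ̃(t₀)ᵀ Γ(t₀)⁻¹ θ̃(t₀))` (Euclidean norm). -/
theorem parameter_error_bounded {N : ℕ} (t₀ : ℝ)
    (θt : ℝ → EuclideanSpace ℝ (Fin N))
    (Γ 𝒢 : ℝ → Matrix (Fin N) (Fin N) ℝ) (β₁ kθ γlo γhi : ℝ)
    (hkθ : 0 < kθ) (hβ₁ : 0 ≤ β₁) (hγlo : 0 < γlo) (hγ : γlo ≤ γhi)
    (h𝒢 : ∀ t ∈ Ici t₀, (𝒢 t).PosSemidef)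
    (hΓsymm : ∀ t ∈ Ici t₀, (Γ t).IsSymm)
    (hΓ : ∀ t ∈ Ici t₀,
      HasDerivWithinAt Γ (β₁ • Γ t - kθ • (Γ t * 𝒢 t * Γ t)) (Ici t₀) t)
    (hΓlo : ∀ t ∈ Ici t₀, (Γ t - γlo • (1 : Matrix (Fin N) (Fin N) ℝ)).PosSemidef)
    (hΓhi : ∀ t ∈ Ici t₀, (γhi • (1 : Matrix (Fin N) (Fin N) ℝ) - Γ t).PosSemidef)
    (hθt : ∀ t ∈ Ici t₀,
      HasDerivWithinAt θt
        (-(kθ • Matrix.toEuclideanLin (Γ t) (Matrix.toEuclideanLin (𝒢 t) (θt t))))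
        (Ici t₀) t) :
    ∀ t ∈ Ici t₀,
      ‖θt t‖ ≤ Real.sqrt (γhi * (inner ℝ (θt t₀) (Matrix.toEuclideanLin (Γ t₀)⁻¹ (θt t₀)) : ℝ)) := by
  classical
  set A : ℝ → (EuclideanSpace ℝ (Fin N) →L[ℝ] EuclideanSpace ℝ (Fin N)) :=
    fun s => eqv N (Γ s) with hAdef
  set B : ℝ → (EuclideanSpace ℝ (Fin N) →L[ℝ] EuclideanSpace ℝ (Fin N)) :=
    fun s => Ring.inverse (A s) with hBdef
  set V : ℝ → ℝ := fun s => inner ℝ (θt s) (B s (θt s)) with hVdef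
  have hPD : ∀ t ∈ Ici t₀, (Γ t).PosDef :=
    fun t ht => posDef_of_bounds hγlo (hΓsymm t ht) (hΓlo t ht)
  have hdet : ∀ t ∈ Ici t₀, IsUnit (Γ t).det :=
    fun t ht => (Matrix.isUnit_iff_isUnit_det _).mp (hPD t ht).isUnit
  have hBeq : ∀ t ∈ Ici t₀, B t = eqv N (Γ t)⁻¹ := by
    intro t ht
    obtain ⟨u, hu1, hu2⟩ := peb_unit (hPD t ht)
    show Ring.inverse (A t) = _
    rw [hAdef]
    simp only
    rw [← hu1, Ring.inverse_unit, hu2]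
  have hVnonneg : ∀ t ∈ Ici t₀, 0 ≤ V t := by
    intro t ht
    show (0:ℝ) ≤ inner ℝ (θt t) (B t (θt t))
    rw [hBeq t ht]
    exact psd_inner_nonneg ((hPD t ht).inv).posSemidef _
  have h𝒢inner : ∀ t ∈ Ici t₀, (0:ℝ) ≤ inner ℝ (θt t) (eqv N (𝒢 t) (θt t)) :=
    fun t ht => psd_inner_nonneg (h𝒢 t ht) _
  set f' : ℝ → ℝ :=
    fun t => -β₁ * V t - kθ * (inner ℝ (θt t) (eqv N (𝒢 t) (θt t)) : ℝ) with hf'def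
  have hBA : ∀ t ∈ Ici t₀, eqv N (Γ t)⁻¹ * eqv N (Γ t) = 1 := by
    intro t ht
    rw [← _root_.map_mul, Matrix.nonsing_inv_mul _ (hdet t ht), _root_.map_one]
  have hAB : ∀ t ∈ Ici t₀, eqv N (Γ t) * eqv N (Γ t)⁻¹ = 1 := by
    intro t ht
    rw [← _root_.map_mul, Matrix.mul_nonsing_inv _ (hdet t ht), _root_.map_one]
  have hVderiv : ∀ t ∈ Ici t₀, HasDerivWithinAt V (f' t) (Ici t₀) t := by
    intro t ht
    obtain ⟨u, hu1, hu2⟩ := peb_unit (hPD t ht)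
    have hA' : HasDerivWithinAt A (eqv N (β₁ • Γ t - kθ • (Γ t * 𝒢 t * Γ t))) (Ici t₀) t := by
      exact ((eclm N).hasFDerivAt.comp_hasDerivWithinAt t (hΓ t ht))
    have hB' : HasDerivWithinAt B
        (-(eqv N (Γ t)⁻¹ * eqv N (β₁ • Γ t - kθ • (Γ t * 𝒢 t * Γ t)) * eqv N (Γ t)⁻¹))
        (Ici t₀) t := by
      have := hasDerivWithinAt_ring_inverse_comp u hu1 hA'
      rwa [hu2] at this
    have hθ' : HasDerivWithinAt θt (-(kθ • (eqv N (Γ t)) ((eqv N (𝒢 t)) (θt t)))) (Ici t₀) t :=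
      hθt t ht
    have hVd := HasDerivWithinAt.inner ℝ hθ' (hB'.clm_apply hθ')
    have heq : (inner ℝ (θt t)
          ((-(eqv N (Γ t)⁻¹ * eqv N (β₁ • Γ t - kθ • (Γ t * 𝒢 t * Γ t)) * eqv N (Γ t)⁻¹)) (θt t)
            + (B t) (-(kθ • (eqv N (Γ t)) ((eqv N (𝒢 t)) (θt t))))) : ℝ)
        + inner ℝ (-(kθ • (eqv N (Γ t)) ((eqv N (𝒢 t)) (θt t)))) ((B t) (θt t)) = f' t := by
      have hBt := hBeq t ht
      set θ := θt t
      set Bi := eqv N (Γ t)⁻¹ with hBi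
      set Ac := eqv N (Γ t) with hAc
      set Gc := eqv N (𝒢 t) with hGc
      have hE : eqv N (β₁ • Γ t - kθ • (Γ t * 𝒢 t * Γ t))
          = β₁ • Ac - kθ • (Ac * Gc * Ac) := by
        simp only [map_sub, _root_.map_smul, _root_.map_mul, hAc, hGc]
      have happ1 : Bi (Ac (Gc θ)) = Gc θ := by
        rw [← ContinuousLinearMap.mul_apply, hBA t ht, ContinuousLinearMap.one_apply]
      have happ2 : Ac (Bi θ) = θ := by
        rw [← ContinuousLinearMap.mul_apply, hAB t ht, ContinuousLinearMap.one_apply]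
      have hkey : Bi * eqv N (β₁ • Γ t - kθ • (Γ t * 𝒢 t * Γ t)) * Bi
          = β₁ • Bi - kθ • Gc := by
        rw [hE]
        have e1 : Bi * Ac * Bi = Bi := by rw [hBA t ht, one_mul]
        have e2 : Bi * (Ac * Gc * Ac) * Bi = Gc := by
          have h3 : Bi * (Ac * Gc * Ac) * Bi = (Bi * Ac) * Gc * (Ac * Bi) := by
            noncomm_ring
          rw [h3, hBA t ht, hAB t ht, one_mul, mul_one]
        have h4 : Bi * (β₁ • Ac - kθ • (Ac * Gc * Ac)) * Bi
            = β₁ • (Bi * Ac * Bi) - kθ • (Bi * (Ac * Gc * Ac) * Bi) := by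
          ext x
          simp only [ContinuousLinearMap.sub_apply, ContinuousLinearMap.smul_apply,
            ContinuousLinearMap.mul_apply, map_sub, _root_.map_smul, ContinuousLinearMap.coe_sub',
            Pi.sub_apply]
        rw [h4, e1, e2]
      have hv1 : (-(Bi * eqv N (β₁ • Γ t - kθ • (Γ t * 𝒢 t * Γ t)) * Bi)) θ
          + Bi (-(kθ • Ac (Gc θ))) = -(β₁ • Bi θ) := by
        rw [hkey]
        simp only [ContinuousLinearMap.neg_apply, ContinuousLinearMap.sub_apply,
          ContinuousLinearMap.smul_apply, map_neg, _root_.map_smul, happ1]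
        module
      rw [hBt, hv1]
      have hs1 : (inner ℝ θ (-(β₁ • Bi θ)) : ℝ) = -β₁ * inner ℝ θ (Bi θ) := by
        rw [inner_neg_right, real_inner_smul_right]; ring
      have hs2 : (inner ℝ (-(kθ • Ac (Gc θ))) (Bi θ) : ℝ) = -(kθ * inner ℝ (Ac (Gc θ)) (Bi θ)) := by
        rw [inner_neg_left, real_inner_smul_left]
      rw [hs1, hs2, symm_inner_swap (hΓsymm t ht), happ2]
      show -β₁ * inner ℝ θ (Bi θ) + -(kθ * inner ℝ (Gc θ) θ)
          = -β₁ * (inner ℝ θ (B t θ) : ℝ) - kθ * inner ℝ θ (Gc θ)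
      rw [hBt, real_inner_comm (Gc θ) θ]
      ring
    rw [heq] at hVd
    exact hVd
  have hγhi0 : (0:ℝ) ≤ γhi := le_trans (le_of_lt hγlo) hγ
  have hcont : ContinuousOn V (Ici t₀) := fun x hx => (hVderiv x hx).continuousWithinAt
  have hVanti : AntitoneOn V (Ici t₀) := by
    refine antitoneOn_of_hasDerivWithinAt_nonpos (f' := f') (convex_Ici t₀) hcont ?_ ?_
    · intro x hx
      rw [interior_Ici] at hx
      exact (hVderiv x (Ioi_subset_Ici_self hx)).mono (by rw [interior_Ici]; exact Ioi_subset_Ici_self)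
    · intro x hx
      rw [interior_Ici] at hx
      have hx' : x ∈ Ici t₀ := Ioi_subset_Ici_self hx
      have h1 := hVnonneg x hx'
      have h2 := h𝒢inner x hx'
      show -β₁ * V x - kθ * (inner ℝ (θt x) (eqv N (𝒢 x) (θt x)) : ℝ) ≤ 0
      nlinarith [mul_nonneg hβ₁ h1, mul_nonneg (le_of_lt hkθ) h2]
  intro t ht
  have ht₀ : t₀ ∈ Ici t₀ := self_mem_Ici
  have hVle : V t ≤ V t₀ := hVanti ht₀ ht ht
  -- square root of (Γ t)⁻¹
  have hMinvPD : ((Γ t)⁻¹).PosDef := (hPD t ht).inv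
  set S : Matrix (Fin N) (Fin N) ℝ := (open scoped MatrixOrder in CFC.sqrt ((Γ t)⁻¹)) with hSdef
  have hSpsd : S.PosSemidef := (open scoped MatrixOrder in Matrix.nonneg_iff_posSemidef.mp (CFC.sqrt_nonneg _))
  have hSS : S * S = (Γ t)⁻¹ := (open scoped MatrixOrder in CFC.sqrt_mul_sqrt_self _ hMinvPD.posSemidef.nonneg)
  have hSsymm : S.IsSymm := isSymm_of_isHermitian hSpsd.1
  set θ : EuclideanSpace ℝ (Fin N) := θt t with hθdef
  set Sc := eqv N S with hScdef
  set Ac := eqv N (Γ t) with hAcdef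
  set Bi := eqv N (Γ t)⁻¹ with hBidef
  have hScSc : ∀ x, Sc (Sc x) = Bi x := by
    intro x
    rw [← ContinuousLinearMap.mul_apply, ← _root_.map_mul, hSS]
  have happBA : ∀ x, Bi (Ac x) = x := by
    intro x
    rw [← ContinuousLinearMap.mul_apply, hBA t ht, ContinuousLinearMap.one_apply]
  have happAB : ∀ x, Ac (Bi x) = x := by
    intro x
    rw [← ContinuousLinearMap.mul_apply, hAB t ht, ContinuousLinearMap.one_apply]
  have key1 : ‖θ‖^2 = (inner ℝ (Sc (Ac θ)) (Sc θ) : ℝ) := by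
    rw [symm_inner_swap hSsymm, hScSc]
    rw [show (inner ℝ (Ac θ) (Bi θ) : ℝ) = inner ℝ θ (Ac (Bi θ)) from symm_inner_swap (hΓsymm t ht) θ (Bi θ), happAB]
    rw [real_inner_self_eq_norm_sq]
  have key2 : ‖Sc θ‖^2 = V t := by
    rw [← real_inner_self_eq_norm_sq, symm_inner_swap hSsymm, hScSc]
    show _ = (inner ℝ (θt t) ((B t) (θt t)) : ℝ)
    rw [hBeq t ht]
  have key3 : ‖Sc (Ac θ)‖^2 ≤ γhi * ‖θ‖^2 := by
    have e1 : ‖Sc (Ac θ)‖^2 = (inner ℝ (Ac θ) θ : ℝ) := by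
      rw [← real_inner_self_eq_norm_sq, symm_inner_swap hSsymm, hScSc, happBA]
    have e2 := psd_inner_nonneg (hΓhi t ht) θ
    have e3 : (inner ℝ θ (eqv N (γhi • (1 : Matrix (Fin N) (Fin N) ℝ) - Γ t) θ) : ℝ)
        = γhi * ‖θ‖^2 - inner ℝ θ (Ac θ) := by
      rw [map_sub, _root_.map_smul, _root_.map_one]
      rw [ContinuousLinearMap.sub_apply, ContinuousLinearMap.smul_apply,
        ContinuousLinearMap.one_apply, inner_sub_right, real_inner_smul_right,
        real_inner_self_eq_norm_sq]
    rw [e3] at e2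
    rw [e1, real_inner_comm]
    linarith
  have hCS : ‖θ‖^2 ≤ ‖Sc (Ac θ)‖ * ‖Sc θ‖ := key1 ▸ real_inner_le_norm _ _
  have hnrm1 : ‖Sc (Ac θ)‖ ≤ Real.sqrt γhi * ‖θ‖ := by
    have h5 := Real.sqrt_le_sqrt key3
    rwa [Real.sqrt_sq (norm_nonneg _), Real.sqrt_mul hγhi0, Real.sqrt_sq (norm_nonneg _)] at h5
  have hnrm2 : ‖Sc θ‖ = Real.sqrt (V t) := by
    rw [← key2, Real.sqrt_sq (norm_nonneg _)]
  have hVt₀eq : (inner ℝ (θt t₀) (Matrix.toEuclideanLin (Γ t₀)⁻¹ (θt t₀)) : ℝ) = V t₀ := by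
    show _ = (inner ℝ (θt t₀) ((B t₀) (θt t₀)) : ℝ)
    rw [hBeq t₀ ht₀, toEuclideanLin_eq]
  have hrhs : Real.sqrt (γhi * (inner ℝ (θt t₀) (Matrix.toEuclideanLin (Γ t₀)⁻¹ (θt t₀)) : ℝ))
      = Real.sqrt γhi * Real.sqrt (V t₀) := by
    rw [hVt₀eq, Real.sqrt_mul hγhi0]
  rw [hrhs]
  rcases eq_or_lt_of_le (norm_nonneg θ) with h0 | h0
  · rw [← h0]
    positivity
  · have step : ‖θ‖ ≤ Real.sqrt γhi * Real.sqrt (V t) := by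
      have := hCS
      rw [hnrm2] at this
      have h6 : ‖θ‖ * ‖θ‖ ≤ (Real.sqrt γhi * Real.sqrt (V t)) * ‖θ‖ := by
        nlinarith [this, hnrm1, Real.sqrt_nonneg (V t), norm_nonneg θ]
      exact le_of_mul_le_mul_right h6 h0
    calc ‖θ‖ ≤ Real.sqrt γhi * Real.sqrt (V t) := step
      _ ≤ Real.sqrt γhi * Real.sqrt (V t₀) :=
        mul_le_mul_of_nonneg_left (Real.sqrt_le_sqrt hVle) (Real.sqrt_nonneg _)
end

section
/- Suppose p̃, η, r : ℝ → ℝⁿ are differentiable and satisfy p̃'(t) = q̃(t), η'(t) = −β η(t) − k r(t) − α q̃(t), and r'(t) = Y(t) θ̃(t) − p̃(t) + (k+α) η(t) − k r(t), where q̃(t) := r(t) − α p̃(t) − η(t) and α, β, k ∈ ℝ. Then V_r(t) := (1/2)(‖p̃(t)‖² + ‖η(t)‖² + ‖r(t)‖²) is differentiable and satisfies, for all t, V_r'(t) = −α‖p̃(t)‖² − (β − α)‖η(t)‖² − k‖r(t)‖² + (α² − 1) p̃(t)ᵀ η(t) + r(t)ᵀ Y(t) θ̃(t); in particular, if moreover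 ‖Y(t) θ̃(t)‖ ≤ c for all t, then V_r'(t) ≤ −α‖p̃(t)‖² − (β − α)‖η(t)‖² + |1 − α²|·‖p̃(t)‖·‖η(t)‖ − k‖r(t)‖² + c‖r(t)‖. -/
lemma hasDerivAt_norm_sq' {n : ℕ} {f : ℝ → EuclideanSpace ℝ (Fin n)}
    {f' : EuclideanSpace ℝ (Fin n)} {t : ℝ} (hf : HasDerivAt f f' t) :
    HasDerivAt (fun s => ‖f s‖ ^ 2) (2 * (inner ℝ (f t) f' : ℝ)) t := by
  have h := hf.inner ℝ hf
  have heq : (fun s => (inner ℝ (f s) (f s) : ℝ)) = fun s => ‖f s‖ ^ 2 := by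
    funext s; rw [real_inner_self_eq_norm_sq]
  rw [heq] at h
  refine h.congr_deriv ?_
  rw [real_inner_comm (f t) f']
  ring

/-- For the observer error dynamics `p̃' = q̃`, `η' = −βη − kr − αq̃`,
`r' = Yθ̃ − p̃ + (k+α)η − kr`, with `q̃ = r − αp̃ − η`, the function
`V_r = (1/2)(‖p̃‖² + ‖η‖² + ‖r‖²)` is differentiable with
`V_r' = −α‖p̃‖² − (β−α)‖η‖² − k‖r‖² + (α²−1)⟪p̃,η⟫ + ⟪r, Yθ̃⟫`;
if moreover `‖Yθ̃‖ ≤ c`, then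
`V_r' ≤ −α‖p̃‖² − (β−α)‖η‖² + |1−α²|‖p̃‖‖η‖ − k‖r‖² + c‖r‖`. -/
theorem deriv_Vr {n N : ℕ}
    (pt η r : ℝ → EuclideanSpace ℝ (Fin n))
    (Y : ℝ → Matrix (Fin n) (Fin N) ℝ) (θt : ℝ → EuclideanSpace ℝ (Fin N))
    (α β k c : ℝ)
    (qt : ℝ → EuclideanSpace ℝ (Fin n))
    (hqdef : ∀ t, qt t = r t - α • pt t - η t)
    (hp : ∀ t, HasDerivAt pt (qt t) t)
    (hη : ∀ t, HasDerivAt η (-β • η t - k • r t - α • qt t) t)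
    (hr : ∀ t, HasDerivAt r
      (Matrix.toEuclideanLin (Y t) (θt t) - pt t + (k + α) • η t - k • r t) t) :
    (∀ t, HasDerivAt (fun s => (1 / 2) * (‖pt s‖ ^ 2 + ‖η s‖ ^ 2 + ‖r s‖ ^ 2))
      (-α * ‖pt t‖ ^ 2 - (β - α) * ‖η t‖ ^ 2 - k * ‖r t‖ ^ 2
        + (α ^ 2 - 1) * (inner ℝ (pt t) (η t) : ℝ)
        + (inner ℝ (r t) (Matrix.toEuclideanLin (Y t) (θt t)) : ℝ)) t)
    ∧ ((∀ t, ‖Matrix.toEuclideanLin (Y t) (θt t)‖ ≤ c) →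
        ∀ t, deriv (fun s => (1 / 2) * (‖pt s‖ ^ 2 + ‖η s‖ ^ 2 + ‖r s‖ ^ 2)) t ≤
          -α * ‖pt t‖ ^ 2 - (β - α) * ‖η t‖ ^ 2 + |1 - α ^ 2| * ‖pt t‖ * ‖η t‖
            - k * ‖r t‖ ^ 2 + c * ‖r t‖) := by
  have main : ∀ t, HasDerivAt (fun s => (1 / 2) * (‖pt s‖ ^ 2 + ‖η s‖ ^ 2 + ‖r s‖ ^ 2))
      (-α * ‖pt t‖ ^ 2 - (β - α) * ‖η t‖ ^ 2 - k * ‖r t‖ ^ 2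
        + (α ^ 2 - 1) * (inner ℝ (pt t) (η t) : ℝ)
        + (inner ℝ (r t) (Matrix.toEuclideanLin (Y t) (θt t)) : ℝ)) t := by
    intro t
    have h1 := hasDerivAt_norm_sq' (hp t)
    have h2 := hasDerivAt_norm_sq' (hη t)
    have h3 := hasDerivAt_norm_sq' (hr t)
    have h := ((h1.add h2).add h3).const_mul (1 / 2 : ℝ)
    refine h.congr_deriv ?_
    rw [hqdef]
    simp only [inner_sub_right, inner_add_right, inner_smul_right, smul_smul,
      neg_smul, inner_neg_right]
    rw [real_inner_self_eq_norm_sq (pt t), real_inner_self_eq_norm_sq (η t),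
      real_inner_self_eq_norm_sq (r t),
      real_inner_comm (r t) (pt t), real_inner_comm (r t) (η t),
      real_inner_comm (η t) (pt t)]
    ring
  refine ⟨main, fun hc t => ?_⟩
  rw [(main t).deriv]
  have hb1 : (α ^ 2 - 1) * (inner ℝ (pt t) (η t) : ℝ) ≤ |1 - α ^ 2| * ‖pt t‖ * ‖η t‖ := by
    calc (α ^ 2 - 1) * (inner ℝ (pt t) (η t) : ℝ)
        ≤ |(α ^ 2 - 1) * (inner ℝ (pt t) (η t) : ℝ)| := le_abs_self _
      _ = |α ^ 2 - 1| * |(inner ℝ (pt t) (η t) : ℝ)| := abs_mul _ _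
      _ ≤ |1 - α ^ 2| * (‖pt t‖ * ‖η t‖) := by
          rw [abs_sub_comm]
          exact mul_le_mul_of_nonneg_left (abs_real_inner_le_norm _ _) (abs_nonneg _)
      _ = |1 - α ^ 2| * ‖pt t‖ * ‖η t‖ := by ring
  have hb2 : (inner ℝ (r t) (Matrix.toEuclideanLin (Y t) (θt t)) : ℝ) ≤ c * ‖r t‖ := by
    calc (inner ℝ (r t) (Matrix.toEuclideanLin (Y t) (θt t)) : ℝ)
        ≤ ‖r t‖ * ‖Matrix.toEuclideanLin (Y t) (θt t)‖ := real_inner_le_norm _ _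
      _ ≤ ‖r t‖ * c := mul_le_mul_of_nonneg_left (hc t) (norm_nonneg _)
      _ = c * ‖r t‖ := mul_comm _ _
  linarith
end

section
/- (Lemma 2.) Suppose p̃, η, r : [t₀, ∞) → ℝⁿ are differentiable and satisfy p̃'(t) = q̃(t), η'(t) = −β η(t) − k r(t) − α q̃(t), and r'(t) = Y(t) θ̃(t) − p̃(t) + (k+α) η(t) − k r(t), where q̃(t) := r(t) − α p̃(t) − η(t), the gains satisfy α > 0, k > 0, and β > (1 + α²)²/(4α), and there is a constant c ≥ 0 with ‖Y(t) θ̃(t)‖ ≤ c for all t. Let Q_r = [[α, −|1 − α²|/2], [−|1 − α²|/2, β − α]], let ϖ_r := min{ 2 λ_min(Q_r), k }, and let V_r(t) := (1/2)(‖p̃(t)‖² + ‖η(t)‖² + ‖r(t)‖²). Then for all t ≥ t₀, V_r(t) ≤ max{ V_r(t₀), c²/(2 k ϖ_r) }; in particular p̃, q̃, η, and r are bounded on [t₀, ∞). -/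
open Set

private lemma quad_pd' {A B D : ℝ} (hA : 0 < A) (hB : 0 < B) (hdet : D^2 < A*B) :
    ∃ ε > 0, ∀ a b : ℝ, ε * (a^2 + b^2) ≤ A*a^2 + B*b^2 - 2*D*a*b := by
  have hd : 0 < A*B - D^2 := by linarith
  have hAB : 0 < A + B := by linarith
  have hεpos : 0 < (1/2) * min (min A B) ((A*B - D^2)/(A+B)) := by
    have : 0 < min (min A B) ((A*B - D^2)/(A+B)) :=
      lt_min (lt_min hA hB) (by positivity)
    linarith
  refine ⟨(1/2) * min (min A B) ((A*B - D^2)/(A+B)), hεpos, fun a b => ?_⟩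
  set ε := (1/2) * min (min A B) ((A*B - D^2)/(A+B)) with hε
  have hεA : ε < A := by
    have h1 : min (min A B) ((A*B - D^2)/(A+B)) ≤ A := le_trans (min_le_left _ _) (min_le_left _ _)
    nlinarith
  have hεd : ε * (A+B) ≤ A*B - D^2 := by
    have h1 : min (min A B) ((A*B - D^2)/(A+B)) ≤ (A*B - D^2)/(A+B) := min_le_right _ _
    have h2 : ε ≤ (A*B - D^2)/(A+B) := by nlinarith
    calc ε * (A+B) ≤ ((A*B - D^2)/(A+B)) * (A+B) := by nlinarith
      _ = A*B - D^2 := by field_simp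
  have huv : D^2 ≤ (A-ε)*(B-ε) := by nlinarith
  have hu : 0 < A - ε := by linarith
  nlinarith [sq_nonneg ((A-ε)*a - D*b), mul_nonneg (sub_nonneg.2 huv) (sq_nonneg b)]

private lemma stay_below' {f f' : ℝ → ℝ} {a b M : ℝ}
    (hf : ContinuousOn f (Icc a b))
    (hf' : ∀ x ∈ Ico a b, HasDerivWithinAt f (f' x) (Ici x) x)
    (ha : f a ≤ M) (hM : ∀ x ∈ Ico a b, M ≤ f x → f' x ≤ 0) :
    ∀ x ∈ Icc a b, f x ≤ M := by
  intro x hx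
  have key : ∀ ε : ℝ, 0 < ε → f x ≤ M + ε * (x - a) := by
    intro ε hε
    have := image_le_of_deriv_right_lt_deriv_boundary' (B := fun t => M + ε * (t - a))
      (B' := fun _ => ε) hf hf'
      (by simp [ha]) (by fun_prop)
      (fun y hy => by
        have : HasDerivWithinAt (fun t => M + ε * (t - a)) (0 + ε * 1) (Ici y) y :=
          (hasDerivWithinAt_const _ _ _).add
            (((hasDerivWithinAt_id y (Ici y)).sub_const a).const_mul ε)
        simpa using this)
      (fun y hy hfy => by
        have h1 : M ≤ f y := by nlinarith [hy.1, mul_nonneg hε.le (sub_nonneg.2 hy.1)]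
        exact lt_of_le_of_lt (hM y hy h1) hε)
    exact this hx
  have hxa : 0 ≤ x - a := by linarith [hx.1]
  by_contra h
  push_neg at h
  rcases eq_or_lt_of_le hxa with heq | hlt
  · have := key 1 one_pos
    nlinarith
  · have hd : 0 < (f x - M) / (2 * (x - a)) := div_pos (by linarith) (by linarith)
    have := key _ hd
    have h2 : ((f x - M) / (2 * (x - a))) * (x - a) = (f x - M)/2 := by
      field_simp
    nlinarith

set_option maxHeartbeats 2000000 in
/-- Lemma 2: for the observer error dynamics `p̃' = q̃`, `η' = −βη − kr − αq̃`,
`r' = Yθ̃ − p̃ + (k+α)η − kr` on `[t₀, ∞)`, with `q̃ = r − αp̃ − η`, gains `α > 0`, `k > 0`,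
`β > (1+α²)²/(4α)`, and `‖Y(t)θ̃(t)‖ ≤ c`, setting
`Q_r = [[α, −|1−α²|/2], [−|1−α²|/2, β−α]]`, `λ_min(Q_r)` its minimum eigenvalue (as the
infimum of the Rayleigh quotient over the unit sphere), `ϖ_r = min{2λ_min(Q_r), k}` and
`V_r = (1/2)(‖p̃‖² + ‖η‖² + ‖r‖²)`, one has `V_r(t) ≤ max{V_r(t₀), c²/(2kϖ_r)}` for all
`t ≥ t₀`; in particular `p̃, q̃, η, r` are bounded on `[t₀, ∞)`. -/
theorem observer_errors_bounded {n N : ℕ} (t₀ : ℝ)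
    (pt η r : ℝ → EuclideanSpace ℝ (Fin n))
    (Y : ℝ → Matrix (Fin n) (Fin N) ℝ) (θt : ℝ → EuclideanSpace ℝ (Fin N))
    (α β k c : ℝ)
    (hα : 0 < α) (hk : 0 < k) (hβ : (1 + α ^ 2) ^ 2 / (4 * α) < β) (hc : 0 ≤ c)
    (qt : ℝ → EuclideanSpace ℝ (Fin n))
    (hqdef : ∀ t, qt t = r t - α • pt t - η t)
    (hp : ∀ t ∈ Ici t₀, HasDerivWithinAt pt (qt t) (Ici t₀) t)
    (hη : ∀ t ∈ Ici t₀, HasDerivWithinAt η (-β • η t - k • r t - α • qt t) (Ici t₀) t)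
    (hr : ∀ t ∈ Ici t₀, HasDerivWithinAt r
      (Matrix.toEuclideanLin (Y t) (θt t) - pt t + (k + α) • η t - k • r t) (Ici t₀) t)
    (hY : ∀ t ∈ Ici t₀, ‖Matrix.toEuclideanLin (Y t) (θt t)‖ ≤ c)
    (Qr : Matrix (Fin 2) (Fin 2) ℝ)
    (hQr : Qr = !![α, -|1 - α ^ 2| / 2; -|1 - α ^ 2| / 2, β - α])
    (lmin : ℝ)
    (hlmin : lmin = sInf ((fun x : EuclideanSpace ℝ (Fin 2) =>
      (inner ℝ x (Matrix.toEuclideanLin Qr x) : ℝ)) '' {x | ‖x‖ = 1}))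
    (ϖr : ℝ) (hϖr : ϖr = min (2 * lmin) k) :
    (∀ t ∈ Ici t₀,
      (1 / 2) * (‖pt t‖ ^ 2 + ‖η t‖ ^ 2 + ‖r t‖ ^ 2) ≤
        max ((1 / 2) * (‖pt t₀‖ ^ 2 + ‖η t₀‖ ^ 2 + ‖r t₀‖ ^ 2)) (c ^ 2 / (2 * k * ϖr)))
    ∧ ∃ C : ℝ, ∀ t ∈ Ici t₀,
        ‖pt t‖ ≤ C ∧ ‖qt t‖ ≤ C ∧ ‖η t‖ ≤ C ∧ ‖r t‖ ≤ C := by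
  classical
  have h4 : (1+α^2)^2 < β * (4*α) := (div_lt_iff₀ (by positivity)).mp hβ
  have hδ : 0 < β - α := by nlinarith [sq_nonneg (1 - α^2)]
  set d : ℝ := |1 - α^2| / 2 with hd
  have hdsq : d^2 = (1-α^2)^2/4 := by rw [hd, div_pow, sq_abs]; norm_num
  have hdet : d^2 < α * (β - α) := by rw [hdsq]; nlinarith
  obtain ⟨ε, hεpos, hquad⟩ := quad_pd' hα hδ hdet
  -- Rayleigh quotient form
  have Rform : ∀ x : EuclideanSpace ℝ (Fin 2),
      (inner ℝ x (Matrix.toEuclideanLin Qr x) : ℝ)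
        = α * (x 0)^2 + (β-α) * (x 1)^2 - 2 * d * (x 0 * x 1) := by
    intro x
    subst hQr
    simp [PiLp.inner_apply, Fin.sum_univ_two, Matrix.toEuclideanLin_apply,
      Matrix.mulVec, dotProduct, hd]
    ring
  have hnorm2 : ∀ x : EuclideanSpace ℝ (Fin 2), ‖x‖^2 = (x 0)^2 + (x 1)^2 := by
    intro x
    rw [← real_inner_self_eq_norm_sq]
    simp only [PiLp.inner_apply, Fin.sum_univ_two, RCLike.inner_apply, conj_trivial]
    ring
  set S := ((fun x : EuclideanSpace ℝ (Fin 2) =>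
      (inner ℝ x (Matrix.toEuclideanLin Qr x) : ℝ)) '' {x | ‖x‖ = 1}) with hS
  have hlb : ∀ y ∈ S, ε ≤ y := by
    rintro y ⟨x, hx, rfl⟩
    have hx1 : ‖x‖ = 1 := hx
    have h2 : (x 0)^2 + (x 1)^2 = 1 := by rw [← hnorm2, hx1]; norm_num
    have := hquad (x 0) (x 1)
    show ε ≤ (inner ℝ x ((Matrix.toEuclideanLin Qr) x) : ℝ)
    rw [Rform]
    nlinarith
  have hbdd : BddBelow S := ⟨ε, hlb⟩
  have hne : S.Nonempty := by
    refine ⟨_, ⟨EuclideanSpace.single 0 1, ?_, rfl⟩⟩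
    simp [EuclideanSpace.norm_single]
  have hεlmin : ε ≤ lmin := by rw [hlmin]; exact le_csInf hne hlb
  have hlminpos : 0 < lmin := lt_of_lt_of_le hεpos hεlmin
  have hϖpos : 0 < ϖr := by rw [hϖr]; exact lt_min (by linarith) hk
  -- general quadratic bound
  have hquadv : ∀ a b : ℝ, lmin * (a^2 + b^2) ≤ α*a^2 + (β-α)*b^2 - 2*d*(a*b) := by
    intro a b
    rcases eq_or_ne (a^2+b^2) 0 with h0 | h0
    · have ha0 : a = 0 := by nlinarith [sq_nonneg a, sq_nonneg b]
      have hb0 : b = 0 := by nlinarith [sq_nonneg a, sq_nonneg b]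
      simp [ha0, hb0]
    · have hspos : 0 < a^2 + b^2 := lt_of_le_of_ne (by positivity) (Ne.symm h0)
      set x : EuclideanSpace ℝ (Fin 2) := (WithLp.equiv 2 (Fin 2 → ℝ)).symm ![a, b] with hxdef
      have hx0 : x 0 = a := rfl
      have hx1 : x 1 = b := rfl
      have hnx : ‖x‖^2 = a^2 + b^2 := by rw [hnorm2, hx0, hx1]
      have hnxpos : 0 < ‖x‖ := by
        rcases (norm_nonneg x).lt_or_eq with h | h
        · exact h
        · exfalso; apply h0; rw [← hnx, ← h]; ring
      set u : EuclideanSpace ℝ (Fin 2) := ‖x‖⁻¹ • x with hudef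
      have hu1 : ‖u‖ = 1 := by
        rw [hudef, norm_smul, norm_inv, norm_norm]
        field_simp
      have hmem : (inner ℝ u (Matrix.toEuclideanLin Qr u) : ℝ) ∈ S := ⟨u, hu1, rfl⟩
      have h1 : lmin ≤ (inner ℝ u (Matrix.toEuclideanLin Qr u) : ℝ) := by
        rw [hlmin]; exact csInf_le hbdd hmem
      have hu0 : u 0 = ‖x‖⁻¹ * a := by rw [hudef]; simp [hx0]
      have hu1' : u 1 = ‖x‖⁻¹ * b := by rw [hudef]; simp [hx1]
      rw [Rform, hu0, hu1'] at h1
      have hinv : (‖x‖⁻¹)^2 * (a^2+b^2) = 1 := by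
        rw [← hnx]
        have hxne : ‖x‖ ≠ 0 := ne_of_gt hnxpos
        field_simp
      have key : (α*(‖x‖⁻¹*a)^2 + (β-α)*(‖x‖⁻¹*b)^2
          - 2*d*((‖x‖⁻¹*a)*(‖x‖⁻¹*b))) * (a^2+b^2)
          = α*a^2 + (β-α)*b^2 - 2*d*(a*b) := by
        linear_combination (α*a^2 + (β-α)*b^2 - 2*d*(a*b)) * hinv
      calc lmin * (a^2+b^2)
          ≤ (α*(‖x‖⁻¹*a)^2 + (β-α)*(‖x‖⁻¹*b)^2
              - 2*d*((‖x‖⁻¹*a)*(‖x‖⁻¹*b))) * (a^2+b^2) :=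
            mul_le_mul_of_nonneg_right h1 hspos.le
        _ = _ := key
  -- the Lyapunov function and its derivative
  set V : ℝ → ℝ := fun t => (1/2) * ((inner ℝ (pt t) (pt t) : ℝ)
      + (inner ℝ (η t) (η t) : ℝ) + (inner ℝ (r t) (r t) : ℝ)) with hV
  have hVnorm : ∀ t, V t = (1/2) * (‖pt t‖^2 + ‖η t‖^2 + ‖r t‖^2) := by
    intro t
    simp only [hV, real_inner_self_eq_norm_sq]
  set dη : ℝ → EuclideanSpace ℝ (Fin n) := fun t => -β • η t - k • r t - α • qt t with hdη
  set dr : ℝ → EuclideanSpace ℝ (Fin n) :=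
    fun t => Matrix.toEuclideanLin (Y t) (θt t) - pt t + (k+α) • η t - k • r t with hdr
  set F : ℝ → ℝ := fun t =>
    (1/2) * ((((inner ℝ (pt t) (qt t) : ℝ)) + ((inner ℝ (qt t) (pt t) : ℝ)))
      + (((inner ℝ (η t) (dη t) : ℝ)) + ((inner ℝ (dη t) (η t) : ℝ)))
      + (((inner ℝ (r t) (dr t) : ℝ)) + ((inner ℝ (dr t) (r t) : ℝ)))) with hF
  have hVd : ∀ t ∈ Ici t₀, HasDerivWithinAt V (F t) (Ici t₀) t := by
    intro t ht
    exact ((((hp t ht).inner ℝ (hp t ht)).add ((hη t ht).inner ℝ (hη t ht))).add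
      ((hr t ht).inner ℝ (hr t ht))).const_mul (1/2)
  -- bound the derivative
  have hFle : ∀ t ∈ Ici t₀, F t ≤ -ϖr * V t + c^2/(2*k) := by
    intro t ht
    have hFexp : F t = -α*‖pt t‖^2 - (β-α)*‖η t‖^2 - k*‖r t‖^2
        + (α^2-1)*(inner ℝ (pt t) (η t) : ℝ)
        + (inner ℝ (r t) (Matrix.toEuclideanLin (Y t) (θt t)) : ℝ) := by
      simp only [hF, hdη, hdr, hqdef t]
      simp only [inner_sub_right, inner_sub_left, inner_add_right, inner_add_left,
        real_inner_smul_right, real_inner_smul_left, real_inner_self_eq_norm_sq]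
      rw [real_inner_comm (η t) (pt t), real_inner_comm (r t) (pt t),
        real_inner_comm (r t) (η t),
        real_inner_comm (Matrix.toEuclideanLin (Y t) (θt t)) (r t)]
      ring
    have h1 : (α^2-1)*(inner ℝ (pt t) (η t) : ℝ) ≤ 2*d*(‖pt t‖*‖η t‖) := by
      have habs : |α^2-1| = 2*d := by rw [hd, abs_sub_comm]; ring
      calc (α^2-1)*(inner ℝ (pt t) (η t) : ℝ)
          ≤ |(α^2-1)*(inner ℝ (pt t) (η t) : ℝ)| := le_abs_self _
        _ = |α^2-1| * |(inner ℝ (pt t) (η t) : ℝ)| := abs_mul _ _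
        _ ≤ |α^2-1| * (‖pt t‖*‖η t‖) :=
            mul_le_mul_of_nonneg_left (abs_real_inner_le_norm _ _) (abs_nonneg _)
        _ = 2*d*(‖pt t‖*‖η t‖) := by rw [habs]
    have h2 : (inner ℝ (r t) (Matrix.toEuclideanLin (Y t) (θt t)) : ℝ) ≤ c * ‖r t‖ := by
      calc (inner ℝ (r t) (Matrix.toEuclideanLin (Y t) (θt t)) : ℝ)
          ≤ ‖r t‖ * ‖Matrix.toEuclideanLin (Y t) (θt t)‖ := real_inner_le_norm _ _
        _ ≤ ‖r t‖ * c := mul_le_mul_of_nonneg_left (hY t ht) (norm_nonneg _)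
        _ = c * ‖r t‖ := mul_comm _ _
    have h3 := hquadv ‖pt t‖ ‖η t‖
    have hstep : c * ‖r t‖ - k * ‖r t‖^2 ≤ -(k/2)*‖r t‖^2 + c^2/(2*k) := by
      rw [← sub_nonneg]
      have h0 : -(k/2)*‖r t‖^2 + c^2/(2*k) - (c*‖r t‖ - k*‖r t‖^2)
          = (k*‖r t‖ - c)^2/(2*k) := by field_simp; ring
      rw [h0]; positivity
    have hϖ1 : ϖr ≤ 2*lmin := by rw [hϖr]; exact min_le_left _ _
    have hϖ2 : ϖr ≤ k := by rw [hϖr]; exact min_le_right _ _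
    have e1 : 0 ≤ (lmin - ϖr/2) * (‖pt t‖^2 + ‖η t‖^2) :=
      mul_nonneg (by linarith) (by positivity)
    have e2 : 0 ≤ (k/2 - ϖr/2) * ‖r t‖^2 := mul_nonneg (by linarith) (sq_nonneg _)
    rw [hFexp, hVnorm t]
    nlinarith [h1, h2, h3, hstep, e1, e2]
  -- fencing
  set M := max (V t₀) (c^2/(2*k*ϖr)) with hM
  have hMbig : ∀ t ∈ Ici t₀, V t ≤ M := by
    intro t ht
    have hsub : ∀ x ∈ Ico t₀ t, HasDerivWithinAt V (F x) (Ici x) x := fun x hx =>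
      (hVd x hx.1).mono (Ici_subset_Ici.2 hx.1)
    have hcont : ContinuousOn V (Icc t₀ t) := fun x hx =>
      ((hVd x hx.1).continuousWithinAt).mono (fun y hy => hy.1)
    refine stay_below' hcont hsub (le_max_left _ _) ?_ t ⟨ht, le_refl t⟩
    intro x hx hMx
    have h1 := hFle x hx.1
    have h2 : c^2/(2*k*ϖr) ≤ M := le_max_right _ _
    have h3 : c^2/(2*k) = (c^2/(2*k*ϖr)) * ϖr := by field_simp
    have h4 := mul_le_mul_of_nonneg_left hMx hϖpos.le
    have h5 := mul_le_mul_of_nonneg_right h2 hϖpos.le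
    nlinarith
  constructor
  · intro t ht
    have h := hMbig t ht
    rw [hVnorm t] at h
    have h0 : V t₀ = (1/2) * (‖pt t₀‖^2 + ‖η t₀‖^2 + ‖r t₀‖^2) := hVnorm t₀
    rw [hM, h0] at h
    exact h
  · refine ⟨(2+α) * Real.sqrt (2*M), fun t ht => ?_⟩
    have hVt0 : 0 ≤ V t₀ := by rw [hVnorm t₀]; positivity
    have hM0 : 0 ≤ M := le_trans hVt0 (le_max_left _ _)
    have hVt := hMbig t ht
    rw [hVnorm t] at hVt
    set s := Real.sqrt (2*M) with hsd
    have hs0 : 0 ≤ s := Real.sqrt_nonneg _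
    have hss : s^2 = 2*M := Real.sq_sqrt (by linarith)
    have hsum : ‖pt t‖^2 + ‖η t‖^2 + ‖r t‖^2 ≤ 2*M := by linarith
    have hps : ‖pt t‖ ≤ s := by
      nlinarith [norm_nonneg (pt t), norm_nonneg (η t), norm_nonneg (r t), sq_nonneg (‖pt t‖ - s)]
    have hηs : ‖η t‖ ≤ s := by
      nlinarith [norm_nonneg (pt t), norm_nonneg (η t), norm_nonneg (r t), sq_nonneg (‖η t‖ - s)]
    have hrs : ‖r t‖ ≤ s := by
      nlinarith [norm_nonneg (pt t), norm_nonneg (η t), norm_nonneg (r t), sq_nonneg (‖r t‖ - s)]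
    have hqs : ‖qt t‖ ≤ (2+α) * s := by
      rw [hqdef t]
      calc ‖r t - α • pt t - η t‖ ≤ ‖r t - α • pt t‖ + ‖η t‖ := norm_sub_le _ _
        _ ≤ ‖r t‖ + ‖α • pt t‖ + ‖η t‖ := by linarith [norm_sub_le (r t) (α • pt t)]
        _ = ‖r t‖ + α * ‖pt t‖ + ‖η t‖ := by rw [norm_smul, Real.norm_eq_abs, abs_of_pos hα]
        _ ≤ s + α * s + s := by
            have := mul_le_mul_of_nonneg_left hps hα.le
            linarith
        _ = (2+α) * s := by ring
    have hbase : s ≤ (2+α) * s := by nlinarith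
    exact ⟨le_trans hps hbase, hqs, le_trans hηs hbase, le_trans hrs hbase⟩
end

section
/- (Theorem 1, exponential convergence phase.) Suppose p̃, η, r : [t_M, ∞) → ℝⁿ and θ̃ : [t_M, ∞) → ℝᴺ are differentiable and satisfy p̃'(t) = q̃(t), η'(t) = −β η(t) − k r(t) − α q̃(t), r'(t) = Y(t) θ̃(t) − p̃(t) + (k+α) η(t) − k r(t), and θ̃'(t) = −k_θ Γ(t) 𝒢(t) θ̃(t), where q̃(t) := r(t) − α p̃(t) − η(t); here Γ : [t_M, ∞) → ℝ^{N×N} is differentiable, symmetric, satisfies Γ̇ = β₁Γ − k_θ Γ 𝒢 Γ with β₁ ≥ 0 and γ̲ I ⪯ Γ(t) ⪯ γ̄ I for constants 0 < γ̲ ≤ γ̄; the matrices 𝒢(t) are symmetric and satisfy θ̃ᵀ𝒢(t)θ̃ ≥ c̲‖θ̃‖² for all θ̃ ∈ ℝᴺ and all t ≥ t_M, with c̲ > 0; ‖Y(t)‖ ≤ Ȳ (operator norm) for all t; and the gains satisfy α > 0, k > 0, k_θ > 0, β > (1 + α²)²/(4α), and k·k_θ·c̲ > Ȳ²/2. Let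 V(t) := (1/2)(‖p̃(t)‖² + ‖η(t)‖² + ‖r(t)‖²) + (1/2) θ̃(t)ᵀ Γ(t)⁻¹ θ̃(t). Then there exists a constant ϖ > 0 such that V(t) ≤ V(t_M) e^{−ϖ (t − t_M)} for all t ≥ t_M; consequently ‖p̃(t)‖, ‖q̃(t)‖, and ‖θ̃(t)‖ all converge exponentially to zero as t → ∞. -/
open Set
attribute [local instance] Matrix.normedAddCommGroup Matrix.normedSpace

open Matrix

set_option maxHeartbeats 1600000
set_option synthInstance.maxHeartbeats 400000

noncomputable section ExpConvAux
variable {N : ℕ}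

lemma expconv_young {a b c : ℝ} (ha : 0 < a) (hb : 0 < b) (hc : c ^ 2 < 4 * a * b) :
    ∃ ε : ℝ, 0 < ε ∧ ∀ x y : ℝ, c * x * y ≤ (a - ε) * x ^ 2 + (b - ε) * y ^ 2 := by
  have hab : 0 < a + b := by linarith
  have hpos : 0 < 4 * a * b - c ^ 2 := by linarith
  set ε := (4 * a * b - c ^ 2) / (8 * (a + b)) with hε
  have hεpos : 0 < ε := div_pos hpos (by positivity)
  have hεval : ε * (8 * (a + b)) = 4 * a * b - c ^ 2 := div_mul_cancel₀ _ (by positivity)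
  refine ⟨ε, hεpos, fun x y => ?_⟩
  have hA : 0 < a - ε := by nlinarith [sq_nonneg c]
  have hB : 0 < b - ε := by nlinarith [sq_nonneg c]
  have hD : c ^ 2 ≤ 4 * (a - ε) * (b - ε) := by nlinarith [sq_nonneg ε]
  nlinarith [sq_nonneg (2 * (a - ε) * x - c * y), mul_pos hA hB, sq_nonneg y,
    mul_nonneg (by nlinarith : (0:ℝ) ≤ 4 * (a - ε) * (b - ε) - c ^ 2) (sq_nonneg y)]

lemma expconv_inner_eq_dot (v w : EuclideanSpace ℝ (Fin N)) :
    (inner ℝ v w : ℝ) = (WithLp.equiv 2 _ v) ⬝ᵥ (WithLp.equiv 2 _ w) := by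
  simp [PiLp.inner_apply, RCLike.inner_apply, dotProduct, mul_comm]

lemma expconv_inner_L {m k : ℕ} (A : Matrix (Fin m) (Fin k) ℝ) (v : EuclideanSpace ℝ (Fin m))
    (w : EuclideanSpace ℝ (Fin k)) :
    (inner ℝ v (Matrix.toEuclideanLin A w) : ℝ)
      = (WithLp.equiv 2 _ v) ⬝ᵥ (A *ᵥ (WithLp.equiv 2 _ w)) := by
  rw [expconv_inner_eq_dot]; rfl

lemma expconv_quad_lo {A : Matrix (Fin N) (Fin N) ℝ} {c : ℝ}
    (h : (A - c • 1).PosSemidef) (v : EuclideanSpace ℝ (Fin N)) :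
    c * ‖v‖ ^ 2 ≤ (inner ℝ v (Matrix.toEuclideanLin A v) : ℝ) := by
  have h2 := h.dotProduct_mulVec_nonneg (WithLp.equiv 2 _ v)
  simp only [star_trivial, sub_mulVec, dotProduct_sub, smul_mulVec, one_mulVec,
    dotProduct_smul, smul_eq_mul] at h2
  have hn : ‖v‖ ^ 2 = (WithLp.equiv 2 _ v) ⬝ᵥ (WithLp.equiv 2 _ v) := by
    rw [← real_inner_self_eq_norm_sq, expconv_inner_eq_dot]
  rw [expconv_inner_L, hn]
  linarith

lemma expconv_quad_hi {A : Matrix (Fin N) (Fin N) ℝ} {c : ℝ}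
    (h : (c • 1 - A).PosSemidef) (v : EuclideanSpace ℝ (Fin N)) :
    (inner ℝ v (Matrix.toEuclideanLin A v) : ℝ) ≤ c * ‖v‖ ^ 2 := by
  have h2 := h.dotProduct_mulVec_nonneg (WithLp.equiv 2 _ v)
  simp only [star_trivial, sub_mulVec, dotProduct_sub, smul_mulVec, one_mulVec,
    dotProduct_smul, smul_eq_mul] at h2
  have hn : ‖v‖ ^ 2 = (WithLp.equiv 2 _ v) ⬝ᵥ (WithLp.equiv 2 _ v) := by
    rw [← real_inner_self_eq_norm_sq, expconv_inner_eq_dot]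
  rw [expconv_inner_L, hn]
  linarith

lemma expconv_Lmul (A B : Matrix (Fin N) (Fin N) ℝ) (v : EuclideanSpace ℝ (Fin N)) :
    Matrix.toEuclideanLin (A * B) v = Matrix.toEuclideanLin A (Matrix.toEuclideanLin B v) := by
  simp [Matrix.toEuclideanLin_apply, Matrix.mulVec_mulVec]

lemma expconv_L_symm {A : Matrix (Fin N) (Fin N) ℝ} (hA : A.IsSymm)
    (v w : EuclideanSpace ℝ (Fin N)) :
    (inner ℝ (Matrix.toEuclideanLin A v) w : ℝ) = inner ℝ v (Matrix.toEuclideanLin A w) := by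
  rw [real_inner_comm, expconv_inner_L, expconv_inner_L]
  set x := WithLp.equiv 2 _ v
  set y := WithLp.equiv 2 _ w
  rw [Matrix.dotProduct_mulVec y A x]
  have : y ᵥ* A = A *ᵥ y := by rw [← Matrix.vecMul_transpose, hA.eq]
  rw [this, dotProduct_comm]

noncomputable def matCLM (N : ℕ) : Matrix (Fin N) (Fin N) ℝ →L[ℝ]
    (EuclideanSpace ℝ (Fin N) →L[ℝ] EuclideanSpace ℝ (Fin N)) :=
  LinearMap.toContinuousLinearMap
    { toFun := fun A => Matrix.toEuclideanCLM (𝕜 := ℝ) A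
      map_add' := fun A B => _root_.map_add _ A B
      map_smul' := fun c A => _root_.map_smul _ c A }

@[simp] lemma matCLM_apply (A : Matrix (Fin N) (Fin N) ℝ) :
    matCLM N A = Matrix.toEuclideanCLM (𝕜 := ℝ) A := rfl

lemma expconv_CLM_apply_eq (A : Matrix (Fin N) (Fin N) ℝ) (v : EuclideanSpace ℝ (Fin N)) :
    Matrix.toEuclideanCLM (𝕜 := ℝ) A v = Matrix.toEuclideanLin A v := rfl

lemma expconv_ringInverse_CLM {A : Matrix (Fin N) (Fin N) ℝ} (hA : IsUnit A) :
    Ring.inverse (Matrix.toEuclideanCLM (𝕜 := ℝ) A) = Matrix.toEuclideanCLM (𝕜 := ℝ) A⁻¹ := by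
  have hdet : IsUnit A.det := (Matrix.isUnit_iff_isUnit_det A).1 hA
  let U : (EuclideanSpace ℝ (Fin N) →L[ℝ] EuclideanSpace ℝ (Fin N))ˣ :=
    ⟨Matrix.toEuclideanCLM (𝕜 := ℝ) A, Matrix.toEuclideanCLM (𝕜 := ℝ) A⁻¹,
     by rw [← _root_.map_mul, Matrix.mul_nonsing_inv _ hdet, _root_.map_one],
     by rw [← _root_.map_mul, Matrix.nonsing_inv_mul _ hdet, _root_.map_one]⟩
  exact Ring.inverse_unit U

lemma expconv_inv_deriv {Γ : ℝ → Matrix (Fin N) (Fin N) ℝ} {Γ' : Matrix (Fin N) (Fin N) ℝ}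
    {s : Set ℝ} {t : ℝ} (hΓ : HasDerivWithinAt Γ Γ' s t) (hU : IsUnit (Γ t)) :
    HasDerivWithinAt (fun τ => Ring.inverse (Matrix.toEuclideanCLM (𝕜 := ℝ) (Γ τ)))
      (-(Matrix.toEuclideanCLM (𝕜 := ℝ) (Γ t)⁻¹ * matCLM N Γ' *
        Matrix.toEuclideanCLM (𝕜 := ℝ) (Γ t)⁻¹)) s t := by
  have hM : HasDerivWithinAt (fun τ => matCLM N (Γ τ)) (matCLM N Γ') s t :=
    (matCLM N).hasFDerivAt.comp_hasDerivWithinAt t hΓ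
  have hdet : IsUnit (Γ t).det := (Matrix.isUnit_iff_isUnit_det _).1 hU
  let U : (EuclideanSpace ℝ (Fin N) →L[ℝ] EuclideanSpace ℝ (Fin N))ˣ :=
    ⟨Matrix.toEuclideanCLM (𝕜 := ℝ) (Γ t), Matrix.toEuclideanCLM (𝕜 := ℝ) (Γ t)⁻¹,
     by rw [← _root_.map_mul, Matrix.mul_nonsing_inv _ hdet, _root_.map_one],
     by rw [← _root_.map_mul, Matrix.nonsing_inv_mul _ hdet, _root_.map_one]⟩
  have hinv := (hasFDerivAt_ringInverse (𝕜 := ℝ) U).comp_hasDerivWithinAt t hM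
  refine hinv.congr_deriv ?_
  rw [ContinuousLinearMap.neg_apply, ContinuousLinearMap.mulLeftRight_apply]
  rfl

lemma expconv_gronwall {V : ℝ → ℝ} {a ϖ : ℝ}
    (hV : ∀ t ∈ Ici a, ∃ d, HasDerivWithinAt V d (Ici a) t ∧ d ≤ -ϖ * V t) :
    ∀ t ∈ Ici a, V t ≤ V a * Real.exp (-ϖ * (t - a)) := by
  intro t ht
  set g : ℝ → ℝ := fun τ => V τ * Real.exp (ϖ * (τ - a)) with hg
  have hgd : ∀ τ ∈ Ici a, ∃ d', HasDerivWithinAt g d' (Ici a) τ ∧ d' ≤ 0 := by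
    intro τ hτ
    obtain ⟨d, hd, hle⟩ := hV τ hτ
    have hexp : HasDerivAt (fun σ => Real.exp (ϖ * (σ - a)))
        (Real.exp (ϖ * (τ - a)) * ϖ) τ := by
      have h1 : HasDerivAt (fun σ : ℝ => ϖ * (σ - a)) ϖ τ := by
        simpa using ((hasDerivAt_id τ).sub_const a).const_mul ϖ
      exact h1.exp
    refine ⟨d * Real.exp (ϖ * (τ - a)) + V τ * (Real.exp (ϖ * (τ - a)) * ϖ),
      hd.mul hexp.hasDerivWithinAt, ?_⟩
    have he := Real.exp_pos (ϖ * (τ - a))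
    nlinarith [mul_le_mul_of_nonneg_right hle he.le]
  have mono : AntitoneOn g (Ici a) := by
    apply antitoneOn_of_deriv_nonpos (convex_Ici a)
    · intro τ hτ
      obtain ⟨d, hd, _⟩ := hgd τ hτ
      exact hd.continuousWithinAt
    · intro τ hτ
      rw [interior_Ici] at hτ
      obtain ⟨d, hd, _⟩ := hgd τ (mem_Ici.2 (le_of_lt hτ))
      exact ((hd.hasDerivAt (Ici_mem_nhds hτ)).differentiableAt).differentiableWithinAt
    · intro τ hτ
      rw [interior_Ici] at hτ
      obtain ⟨d, hd, hle⟩ := hgd τ (mem_Ici.2 (le_of_lt hτ))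
      rw [(hd.hasDerivAt (Ici_mem_nhds hτ)).deriv]
      exact hle
  have h1 : g t ≤ g a := mono self_mem_Ici ht ht
  have h2 : g a = V a := by simp [hg]
  rw [h2] at h1
  have he := Real.exp_pos (ϖ * (t - a))
  have hrw : Real.exp (-ϖ * (t - a)) = (Real.exp (ϖ * (t - a)))⁻¹ := by
    rw [← Real.exp_neg]; ring_nf
  rw [hrw, ← div_eq_mul_inv, le_div_iff₀ he]
  exact h1

lemma expconv_posdef {A : Matrix (Fin N) (Fin N) ℝ} {glo : ℝ} (hglo : 0 < glo)
    (hlo : (A - glo • 1).PosSemidef) : A.PosDef := by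
  have h1 : (glo • (1 : Matrix (Fin N) (Fin N) ℝ)).PosDef := by
    rw [Matrix.smul_one_eq_diagonal]
    exact Matrix.posDef_diagonal_iff.2 fun i => hglo
  have h2 := Matrix.PosDef.posSemidef_add hlo h1
  simpa using h2

lemma expconv_L_one (v : EuclideanSpace ℝ (Fin N)) :
    Matrix.toEuclideanLin (1 : Matrix (Fin N) (Fin N) ℝ) v = v := by
  simp [Matrix.toEuclideanLin_apply]

lemma expconv_sandwich {A G : Matrix (Fin N) (Fin N) ℝ} {b c : ℝ} (hdet : IsUnit A.det) :
    A⁻¹ * (b • A - c • (A * G * A)) * A⁻¹ = b • A⁻¹ - c • G := by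
  have h1 : A * A⁻¹ = 1 := Matrix.mul_nonsing_inv _ hdet
  have h2 : A⁻¹ * A = 1 := Matrix.nonsing_inv_mul _ hdet
  rw [Matrix.mul_sub, Matrix.sub_mul]
  congr 1
  · rw [Matrix.mul_smul, Matrix.smul_mul, h2, one_mul]
  · rw [Matrix.mul_smul, Matrix.smul_mul]
    have h3 : A⁻¹ * (A * G * A) * A⁻¹ = G := by
      simp only [← Matrix.mul_assoc]
      rw [h2, one_mul, Matrix.mul_assoc, h1, mul_one]
    rw [h3]

lemma expconv_inv_quad {A : Matrix (Fin N) (Fin N) ℝ} {glo ghi : ℝ}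
    (hglo : 0 < glo) (hghi : 0 < ghi) (hsymm : A.IsSymm)
    (hlo : (A - glo • 1).PosSemidef) (hhi : (ghi • 1 - A).PosSemidef)
    (v : EuclideanSpace ℝ (Fin N)) :
    ‖v‖ ^ 2 / ghi ≤ (inner ℝ v (Matrix.toEuclideanLin A⁻¹ v) : ℝ) ∧
      (inner ℝ v (Matrix.toEuclideanLin A⁻¹ v) : ℝ) ≤ ‖v‖ ^ 2 / glo := by
  have hPD := expconv_posdef hglo hlo
  have hdet : IsUnit A.det := (Matrix.isUnit_iff_isUnit_det _).1 hPD.isUnit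
  set w := Matrix.toEuclideanLin A⁻¹ v with hw
  have hAw : Matrix.toEuclideanLin A w = v := by
    rw [hw, ← expconv_Lmul, Matrix.mul_nonsing_inv _ hdet, expconv_L_one]
  have hsWA : (inner ℝ v w : ℝ) = inner ℝ w (Matrix.toEuclideanLin A w) := by
    rw [hAw, real_inner_comm]
  have hlow_w : glo * ‖w‖ ^ 2 ≤ (inner ℝ v w : ℝ) := by
    rw [hsWA]; exact expconv_quad_lo hlo w
  have hcs : (inner ℝ v w : ℝ) ≤ ‖v‖ * ‖w‖ := real_inner_le_norm v w
  constructor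
  · -- lower bound
    set c := 1 / ghi with hc
    have hcpos : 0 < c := by positivity
    have hcg : c * ghi = 1 := by rw [hc]; field_simp
    have h0 : (0:ℝ) ≤ inner ℝ (w - c • v) (Matrix.toEuclideanLin A (w - c • v)) := by
      refine le_trans ?_ (expconv_quad_lo hlo (w - c • v))
      positivity
    have hexpand : Matrix.toEuclideanLin A (w - c • v)
        = v - c • Matrix.toEuclideanLin A v := by
      rw [map_sub, _root_.map_smul, hAw]
    rw [hexpand, inner_sub_left, inner_sub_right, inner_sub_right] at h0
    simp only [real_inner_smul_left, real_inner_smul_right] at h0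
    have e1 : (inner ℝ w (Matrix.toEuclideanLin A v) : ℝ) = ‖v‖ ^ 2 := by
      rw [← expconv_L_symm hsymm w v, hAw, real_inner_self_eq_norm_sq]
    have e2 : (inner ℝ w v : ℝ) = inner ℝ v w := real_inner_comm _ _
    have e3 : (inner ℝ v v : ℝ) = ‖v‖ ^ 2 := real_inner_self_eq_norm_sq v
    rw [e1, e2, e3] at h0
    have hAvv := expconv_quad_hi hhi v
    have step : c * (c * (inner ℝ v (Matrix.toEuclideanLin A v) : ℝ)) ≤ c * ‖v‖ ^ 2 := by
      have s1 : c * (inner ℝ v (Matrix.toEuclideanLin A v) : ℝ) ≤ c * (ghi * ‖v‖ ^ 2) :=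
        mul_le_mul_of_nonneg_left hAvv hcpos.le
      have s2 : c * (ghi * ‖v‖ ^ 2) = ‖v‖ ^ 2 := by
        rw [← mul_assoc, hcg, one_mul]
      calc c * (c * (inner ℝ v (Matrix.toEuclideanLin A v) : ℝ))
          ≤ c * (c * (ghi * ‖v‖ ^ 2)) := by
            exact mul_le_mul_of_nonneg_left s1 hcpos.le
        _ = c * ‖v‖ ^ 2 := by rw [s2]
    have hfin : ‖v‖ ^ 2 / ghi = c * ‖v‖ ^ 2 := by rw [hc]; ring
    rw [hfin]
    nlinarith [h0, step]
  · -- upper bound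
    rw [le_div_iff₀ hglo]
    nlinarith [norm_nonneg v, norm_nonneg w, sq_nonneg (‖v‖ - glo * ‖w‖), hlow_w, hcs]


lemma expconv_L_adj {N : ℕ} {A : Matrix (Fin N) (Fin N) ℝ} (v w : EuclideanSpace ℝ (Fin N)) :
    (inner ℝ (Matrix.toEuclideanLin A v) w : ℝ) = inner ℝ v (Matrix.toEuclideanLin Aᵀ w) := by
  rw [real_inner_comm, expconv_inner_L, expconv_inner_L]
  set x := WithLp.equiv 2 _ v
  set y := WithLp.equiv 2 _ w
  rw [Matrix.dotProduct_mulVec y A x]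
  have h1 : y ᵥ* A = Aᵀ *ᵥ y := by
    have := Matrix.vecMul_transpose Aᵀ y
    rwa [Matrix.transpose_transpose] at this
  rw [h1, dotProduct_comm]

lemma expconv_sandwich' {N : ℕ} {A G : Matrix (Fin N) (Fin N) ℝ} {b c : ℝ}
    (hdet : IsUnit A.det) :
    A⁻¹ * ((b • A - c • (A * G * A)) * A⁻¹) = b • A⁻¹ - c • G := by
  rw [← Matrix.mul_assoc]; exact expconv_sandwich hdet

lemma expconv_sq_decay {x M ϖ Δ : ℝ} (hx : 0 ≤ x) (hM : 0 ≤ M)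
    (h : x ^ 2 ≤ M * Real.exp (-ϖ * Δ)) : x ≤ Real.sqrt M * Real.exp (-(ϖ/2) * Δ) := by
  have h1 : x = Real.sqrt (x ^ 2) := by rw [Real.sqrt_sq hx]
  rw [h1]
  have h2 := Real.sqrt_le_sqrt h
  rw [Real.sqrt_mul hM] at h2
  have h3 : Real.sqrt (Real.exp (-ϖ * Δ)) = Real.exp (-(ϖ/2) * Δ) := by
    have h4 : -(ϖ/2) * Δ = (-ϖ * Δ)/2 := by ring
    rw [h4, Real.exp_half]
  rwa [h3] at h2

end ExpConvAux

/-- Theorem 1 (exponential convergence phase): under the observer/estimator error dynamics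
`p̃' = q̃`, `η' = −βη − kr − αq̃`, `r' = Yθ̃ − p̃ + (k+α)η − kr`, `θ̃' = −k_θ Γ 𝒢 θ̃` on
`[t_M, ∞)`, with `q̃ = r − αp̃ − η`, `Γ` symmetric, differentiable, satisfying
`Γ̇ = β₁Γ − k_θ Γ 𝒢 Γ` (`β₁ ≥ 0`) and `γ̲ I ⪯ Γ ⪯ γ̄ I` (`0 < γ̲ ≤ γ̄`), `𝒢(t)` symmetric
with `θ̃ᵀ𝒢(t)θ̃ ≥ c̲‖θ̃‖²` (`c̲ > 0`), `‖Y(t)‖ ≤ Ȳ` (operator norm), and gains `α > 0`,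
`k > 0`, `k_θ > 0`, `β > (1+α²)²/(4α)`, `k·k_θ·c̲ > Ȳ²/2`, the Lyapunov function
`V = (1/2)(‖p̃‖² + ‖η‖² + ‖r‖²) + (1/2) θ̃ᵀΓ⁻¹θ̃` decays as `V(t) ≤ V(t_M) e^{−ϖ(t−t_M)}`
for some `ϖ > 0`, and `‖p̃‖, ‖q̃‖, ‖θ̃‖` converge exponentially to zero. -/
theorem exponential_convergence {n N : ℕ} (tM : ℝ)
    (pt η r : ℝ → EuclideanSpace ℝ (Fin n))
    (θt : ℝ → EuclideanSpace ℝ (Fin N))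
    (Y : ℝ → Matrix (Fin n) (Fin N) ℝ)
    (Γ 𝒢 : ℝ → Matrix (Fin N) (Fin N) ℝ)
    (α β k kθ β₁ γlo γhi clo Ybar : ℝ)
    (hα : 0 < α) (hk : 0 < k) (hkθ : 0 < kθ) (hβ₁ : 0 ≤ β₁)
    (hγlo : 0 < γlo) (hγ : γlo ≤ γhi) (hclo : 0 < clo)
    (hβ : (1 + α ^ 2) ^ 2 / (4 * α) < β)
    (hgain : Ybar ^ 2 / 2 < k * kθ * clo)
    (qt : ℝ → EuclideanSpace ℝ (Fin n))
    (hqdef : ∀ t, qt t = r t - α • pt t - η t)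
    (hp : ∀ t ∈ Ici tM, HasDerivWithinAt pt (qt t) (Ici tM) t)
    (hη : ∀ t ∈ Ici tM, HasDerivWithinAt η (-β • η t - k • r t - α • qt t) (Ici tM) t)
    (hr : ∀ t ∈ Ici tM, HasDerivWithinAt r
      (Matrix.toEuclideanLin (Y t) (θt t) - pt t + (k + α) • η t - k • r t) (Ici tM) t)
    (hθt : ∀ t ∈ Ici tM, HasDerivWithinAt θt
      (-(kθ • Matrix.toEuclideanLin (Γ t) (Matrix.toEuclideanLin (𝒢 t) (θt t)))) (Ici tM) t)
    (hΓsymm : ∀ t ∈ Ici tM, (Γ t).IsSymm)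
    (hΓ : ∀ t ∈ Ici tM,
      HasDerivWithinAt Γ (β₁ • Γ t - kθ • (Γ t * 𝒢 t * Γ t)) (Ici tM) t)
    (hΓlo : ∀ t ∈ Ici tM, (Γ t - γlo • (1 : Matrix (Fin N) (Fin N) ℝ)).PosSemidef)
    (hΓhi : ∀ t ∈ Ici tM, (γhi • (1 : Matrix (Fin N) (Fin N) ℝ) - Γ t).PosSemidef)
    (h𝒢symm : ∀ t ∈ Ici tM, (𝒢 t).IsSymm)
    (h𝒢 : ∀ t ∈ Ici tM, ∀ v : EuclideanSpace ℝ (Fin N),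
      clo * ‖v‖ ^ 2 ≤ (inner ℝ v (Matrix.toEuclideanLin (𝒢 t) v) : ℝ))
    (hY : ∀ t ∈ Ici tM, ∀ x : EuclideanSpace ℝ (Fin N),
      ‖Matrix.toEuclideanLin (Y t) x‖ ≤ Ybar * ‖x‖) :
    ∃ ϖ : ℝ, 0 < ϖ ∧
      (∀ t ∈ Ici tM,
        (1 / 2) * (‖pt t‖ ^ 2 + ‖η t‖ ^ 2 + ‖r t‖ ^ 2)
            + (1 / 2) * (inner ℝ (θt t) (Matrix.toEuclideanLin (Γ t)⁻¹ (θt t)) : ℝ) ≤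
          ((1 / 2) * (‖pt tM‖ ^ 2 + ‖η tM‖ ^ 2 + ‖r tM‖ ^ 2)
            + (1 / 2) * (inner ℝ (θt tM) (Matrix.toEuclideanLin (Γ tM)⁻¹ (θt tM)) : ℝ))
            * Real.exp (-ϖ * (t - tM))) ∧
      ∃ C κ : ℝ, 0 < κ ∧ ∀ t ∈ Ici tM,
        ‖pt t‖ ≤ C * Real.exp (-κ * (t - tM)) ∧
        ‖qt t‖ ≤ C * Real.exp (-κ * (t - tM)) ∧
        ‖θt t‖ ≤ C * Real.exp (-κ * (t - tM)) := by
  have hγhi : 0 < γhi := lt_of_lt_of_le hγlo hγ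
  have hβ' : (1 + α ^ 2) ^ 2 < 4 * α * β := by
    rw [div_lt_iff₀ (by positivity)] at hβ
    linarith
  have hβα : α < β := by nlinarith [sq_nonneg (1 - α ^ 2)]
  obtain ⟨ε₁, hε₁, hY1⟩ := expconv_young (a := α) (b := β - α) (c := |α ^ 2 - 1|) hα
    (by linarith) (by rw [sq_abs]; nlinarith)
  obtain ⟨ε₂, hε₂, hY2⟩ := expconv_young (a := k) (b := kθ * clo / 2) (c := Ybar) hk
    (by positivity) (by nlinarith)
  set ε := min ε₁ ε₂ with hεdef
  set m := min 1 γlo with hmdef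
  have hεpos : 0 < ε := lt_min hε₁ hε₂
  have hmpos : 0 < m := lt_min one_pos hγlo
  have hεle1 : ε ≤ ε₁ := min_le_left _ _
  have hεle2 : ε ≤ ε₂ := min_le_right _ _
  have hmle1 : m ≤ 1 := min_le_left _ _
  have hmleγ : m ≤ γlo := min_le_right _ _
  clear_value ε m
  have hPD : ∀ τ ∈ Ici tM, (Γ τ).PosDef := fun τ hτ => expconv_posdef hγlo (hΓlo τ hτ)
  have hUnit : ∀ τ ∈ Ici tM, IsUnit (Γ τ) := fun τ hτ => (hPD τ hτ).isUnit
  have hdet : ∀ τ ∈ Ici tM, IsUnit (Γ τ).det :=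
    fun τ hτ => (Matrix.isUnit_iff_isUnit_det _).1 (hUnit τ hτ)
  have hquad : ∀ τ ∈ Ici tM,
      ‖θt τ‖ ^ 2 / γhi ≤ (inner ℝ (θt τ) (Matrix.toEuclideanLin (Γ τ)⁻¹ (θt τ)) : ℝ) ∧
      (inner ℝ (θt τ) (Matrix.toEuclideanLin (Γ τ)⁻¹ (θt τ)) : ℝ) ≤ ‖θt τ‖ ^ 2 / γlo :=
    fun τ hτ => expconv_inv_quad hγlo hγhi (hΓsymm τ hτ) (hΓlo τ hτ) (hΓhi τ hτ) (θt τ)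
  set Vf : ℝ → ℝ := fun τ =>
    (1 / 2) * (‖pt τ‖ ^ 2 + ‖η τ‖ ^ 2 + ‖r τ‖ ^ 2)
      + (1 / 2) * (inner ℝ (θt τ) (Matrix.toEuclideanLin (Γ τ)⁻¹ (θt τ)) : ℝ) with hVf
  clear_value Vf
  have key : ∀ t ∈ Ici tM, ∃ d, HasDerivWithinAt Vf d (Ici tM) t
      ∧ d ≤ -(2 * ε * m) * Vf t := by
    intro t ht
    have hUt := hUnit t ht
    have hdt := hdet t ht
    have hDp : HasDerivWithinAt (fun τ => (inner ℝ (pt τ) (pt τ) : ℝ))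
        (2 * ((inner ℝ (pt t) (r t) : ℝ) - α * ‖pt t‖ ^ 2 - (inner ℝ (pt t) (η t) : ℝ)))
        (Ici tM) t := by
      have h0 := (hp t ht).inner ℝ (hp t ht)
      refine h0.congr_deriv ?_
      rw [hqdef t]
      simp only [inner_sub_left, inner_sub_right, inner_add_left, inner_add_right,
        real_inner_smul_left, real_inner_smul_right, real_inner_self_eq_norm_sq]
      simp only [real_inner_comm (η t) (pt t), real_inner_comm (r t) (pt t),
        real_inner_comm (r t) (η t)]
      ring
    have hDη : HasDerivWithinAt (fun τ => (inner ℝ (η τ) (η τ) : ℝ))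
        (2 * (-β * ‖η t‖ ^ 2 - k * (inner ℝ (η t) (r t) : ℝ)
          - α * ((inner ℝ (η t) (r t) : ℝ) - α * (inner ℝ (pt t) (η t) : ℝ) - ‖η t‖ ^ 2)))
        (Ici tM) t := by
      have h0 := (hη t ht).inner ℝ (hη t ht)
      refine h0.congr_deriv ?_
      rw [hqdef t]
      simp only [inner_sub_left, inner_sub_right, inner_add_left, inner_add_right,
        real_inner_smul_left, real_inner_smul_right, real_inner_self_eq_norm_sq]
      simp only [real_inner_comm (η t) (pt t), real_inner_comm (r t) (pt t),
        real_inner_comm (r t) (η t)]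
      ring
    have hDr : HasDerivWithinAt (fun τ => (inner ℝ (r τ) (r τ) : ℝ))
        (2 * ((inner ℝ (r t) (Matrix.toEuclideanLin (Y t) (θt t)) : ℝ)
          - (inner ℝ (pt t) (r t) : ℝ) + (k + α) * (inner ℝ (η t) (r t) : ℝ) - k * ‖r t‖ ^ 2))
        (Ici tM) t := by
      have h0 := (hr t ht).inner ℝ (hr t ht)
      refine h0.congr_deriv ?_
      simp only [inner_sub_left, inner_sub_right, inner_add_left, inner_add_right,
        real_inner_smul_left, real_inner_smul_right, real_inner_self_eq_norm_sq]
      simp only [real_inner_comm (η t) (pt t), real_inner_comm (r t) (pt t),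
        real_inner_comm (r t) (η t),
        real_inner_comm (Matrix.toEuclideanLin (Y t) (θt t)) (r t),
        real_inner_comm (Matrix.toEuclideanLin (Y t) (θt t)) (pt t),
        real_inner_comm (Matrix.toEuclideanLin (Y t) (θt t)) (η t)]
      ring
    have hDθ : HasDerivWithinAt
        (fun τ => (inner ℝ (θt τ)
          ((Ring.inverse (Matrix.toEuclideanCLM (𝕜 := ℝ) (Γ τ))) (θt τ)) : ℝ))
        (-β₁ * (inner ℝ (θt t) (Matrix.toEuclideanLin (Γ t)⁻¹ (θt t)) : ℝ)
          - 2 * kθ * (inner ℝ (θt t) (Matrix.toEuclideanLin (𝒢 t) (θt t)) : ℝ)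
          + kθ * (inner ℝ (θt t) (Matrix.toEuclideanLin (𝒢 t) (θt t)) : ℝ))
        (Ici tM) t := by
      have happ := (expconv_inv_deriv (hΓ t ht) hUt).clm_apply (hθt t ht)
      have h0 := (hθt t ht).inner ℝ happ
      refine h0.congr_deriv ?_
      have id1 : (Γ t)⁻¹ * (Γ t * 𝒢 t) = 𝒢 t := by
        rw [← Matrix.mul_assoc, Matrix.nonsing_inv_mul _ hdt, one_mul]
      have id4 : (Γ t * 𝒢 t)ᵀ * (Γ t)⁻¹ = 𝒢 t := by
        rw [Matrix.transpose_mul, (hΓsymm t ht).eq, (h𝒢symm t ht).eq, Matrix.mul_assoc,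
          Matrix.mul_nonsing_inv _ hdt, mul_one]
      rw [expconv_ringInverse_CLM hUt]
      simp only [ContinuousLinearMap.neg_apply, ContinuousLinearMap.mul_apply, matCLM_apply,
        expconv_CLM_apply_eq, map_neg, _root_.map_smul, inner_neg_left, inner_neg_right,
        inner_add_right, real_inner_smul_left, real_inner_smul_right, expconv_L_adj,
        ← expconv_Lmul]
      rw [expconv_sandwich' hdt, id1, id4]
      simp only [map_sub, _root_.map_smul, LinearMap.sub_apply, LinearMap.smul_apply,
        inner_sub_right, real_inner_smul_right]
      ring
    refine ⟨_, ((((hDp.add hDη).add hDr).const_mul (1/2 : ℝ)).add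
      (hDθ.const_mul (1/2 : ℝ))).congr ?_ ?_, ?_⟩
    · intro τ hτ
      simp only [hVf, Pi.add_apply]
      rw [expconv_ringInverse_CLM (hUnit τ hτ)]
      simp only [real_inner_self_eq_norm_sq]
      rfl
    · simp only [hVf, Pi.add_apply]
      rw [expconv_ringInverse_CLM hUt]
      simp only [real_inner_self_eq_norm_sq]
      rfl
    have hA0 : (0:ℝ) ≤ ‖pt t‖ ^ 2 := sq_nonneg _
    have hB0 : (0:ℝ) ≤ ‖η t‖ ^ 2 := sq_nonneg _
    have hC0 : (0:ℝ) ≤ ‖r t‖ ^ 2 := sq_nonneg _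
    have hD0 : (0:ℝ) ≤ ‖θt t‖ ^ 2 := sq_nonneg _
    have hWlo := (hquad t ht).1
    have hWhi := (hquad t ht).2
    have hW0 : (0:ℝ) ≤ (inner ℝ (θt t) (Matrix.toEuclideanLin (Γ t)⁻¹ (θt t)) : ℝ) :=
      le_trans (by positivity) hWlo
    have hγW : γlo * (inner ℝ (θt t) (Matrix.toEuclideanLin (Γ t)⁻¹ (θt t)) : ℝ)
        ≤ ‖θt t‖ ^ 2 := by
      have h1 := (le_div_iff₀ hγlo).1 hWhi
      linarith
    have i1 : (α ^ 2 - 1) * (inner ℝ (pt t) (η t) : ℝ)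
        ≤ (α - ε₁) * ‖pt t‖ ^ 2 + ((β - α) - ε₁) * ‖η t‖ ^ 2 := by
      have i1a : (α ^ 2 - 1) * (inner ℝ (pt t) (η t) : ℝ)
          ≤ |α ^ 2 - 1| * (‖pt t‖ * ‖η t‖) := by
        calc (α ^ 2 - 1) * (inner ℝ (pt t) (η t) : ℝ)
            ≤ |(α ^ 2 - 1) * (inner ℝ (pt t) (η t) : ℝ)| := le_abs_self _
          _ = |α ^ 2 - 1| * |(inner ℝ (pt t) (η t) : ℝ)| := abs_mul _ _
          _ ≤ |α ^ 2 - 1| * (‖pt t‖ * ‖η t‖) :=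
              mul_le_mul_of_nonneg_left (abs_real_inner_le_norm _ _) (abs_nonneg _)
      have h := hY1 ‖pt t‖ ‖η t‖
      rw [mul_assoc] at h
      linarith
    have i2 : (inner ℝ (r t) (Matrix.toEuclideanLin (Y t) (θt t)) : ℝ)
        ≤ (k - ε₂) * ‖r t‖ ^ 2 + (kθ * clo / 2 - ε₂) * ‖θt t‖ ^ 2 := by
      have h1 : (inner ℝ (r t) (Matrix.toEuclideanLin (Y t) (θt t)) : ℝ)
          ≤ ‖r t‖ * (Ybar * ‖θt t‖) := by
        calc (inner ℝ (r t) (Matrix.toEuclideanLin (Y t) (θt t)) : ℝ)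
            ≤ ‖r t‖ * ‖Matrix.toEuclideanLin (Y t) (θt t)‖ := real_inner_le_norm _ _
          _ ≤ ‖r t‖ * (Ybar * ‖θt t‖) :=
              mul_le_mul_of_nonneg_left (hY t ht (θt t)) (norm_nonneg _)
      have h2 := hY2 ‖r t‖ ‖θt t‖
      linarith only [h1, h2]
    have i3 : kθ / 2 * (clo * ‖θt t‖ ^ 2)
        ≤ kθ / 2 * (inner ℝ (θt t) (Matrix.toEuclideanLin (𝒢 t) (θt t)) : ℝ) := by
      have h1 := h𝒢 t ht (θt t)
      have hk2 : (0:ℝ) ≤ kθ / 2 := by positivity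
      exact mul_le_mul_of_nonneg_left h1 hk2
    have e1 : ε * m ≤ ε := by
      have h1 := mul_le_mul_of_nonneg_left hmle1 hεpos.le
      simpa using h1
    have e2 : ε * m ≤ ε₁ := le_trans e1 hεle1
    have e3 : ε * m ≤ ε₂ := le_trans e1 hεle2
    have p1 : ε * m * ‖pt t‖ ^ 2 ≤ ε₁ * ‖pt t‖ ^ 2 := mul_le_mul_of_nonneg_right e2 hA0
    have p2 : ε * m * ‖η t‖ ^ 2 ≤ ε₁ * ‖η t‖ ^ 2 := mul_le_mul_of_nonneg_right e2 hB0
    have p3 : ε * m * ‖r t‖ ^ 2 ≤ ε₂ * ‖r t‖ ^ 2 := mul_le_mul_of_nonneg_right e3 hC0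
    have p4 : ε * m * (inner ℝ (θt t) (Matrix.toEuclideanLin (Γ t)⁻¹ (θt t)) : ℝ)
        ≤ ε₂ * ‖θt t‖ ^ 2 := by
      have s1 : m * (inner ℝ (θt t) (Matrix.toEuclideanLin (Γ t)⁻¹ (θt t)) : ℝ)
          ≤ γlo * (inner ℝ (θt t) (Matrix.toEuclideanLin (Γ t)⁻¹ (θt t)) : ℝ) :=
        mul_le_mul_of_nonneg_right hmleγ hW0
      have s2 := mul_le_mul_of_nonneg_left s1 hεpos.le
      have s3 := mul_le_mul_of_nonneg_left hγW hεpos.le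
      have s4 : ε * ‖θt t‖ ^ 2 ≤ ε₂ * ‖θt t‖ ^ 2 :=
        mul_le_mul_of_nonneg_right hεle2 hD0
      linarith only [s2, s3, s4]
    have hβ₁W : 0 ≤ β₁ / 2
        * (inner ℝ (θt t) (Matrix.toEuclideanLin (Γ t)⁻¹ (θt t)) : ℝ) :=
      mul_nonneg (by positivity) hW0
    simp only [hVf]
    linarith only [i1, i2, i3, p1, p2, p3, p4, hW0, hβ₁W]
  have decay := expconv_gronwall key
  refine ⟨2 * ε * m, by linarith only [mul_pos hεpos hmpos], fun t ht => ?_, ?_⟩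
  · have h1 := decay t ht
    simpa only [hVf] using h1
  · have hVM0 : 0 ≤ Vf tM := by
      have h1 := (hquad tM self_mem_Ici).1
      have h0 : 0 ≤ (inner ℝ (θt tM) (Matrix.toEuclideanLin (Γ tM)⁻¹ (θt tM)) : ℝ) :=
        le_trans (by positivity) h1
      simp only [hVf]
      linarith only [h0, sq_nonneg ‖pt tM‖, sq_nonneg ‖η tM‖, sq_nonneg ‖r tM‖]
    refine ⟨(2 + α) * Real.sqrt (2 * Vf tM) + Real.sqrt (2 * γhi * Vf tM),
      (2 * ε * m) / 2, by linarith only [mul_pos hεpos hmpos], fun t ht => ?_⟩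
    have hdec := decay t ht
    have hWt0 : 0 ≤ (inner ℝ (θt t) (Matrix.toEuclideanLin (Γ t)⁻¹ (θt t)) : ℝ) :=
      le_trans (by positivity) (hquad t ht).1
    have hA0 : (0:ℝ) ≤ ‖pt t‖ ^ 2 := sq_nonneg _
    have hB0 : (0:ℝ) ≤ ‖η t‖ ^ 2 := sq_nonneg _
    have hC0 : (0:ℝ) ≤ ‖r t‖ ^ 2 := sq_nonneg _
    have hVft : Vf t = (1 / 2) * (‖pt t‖ ^ 2 + ‖η t‖ ^ 2 + ‖r t‖ ^ 2)
        + (1 / 2) * (inner ℝ (θt t) (Matrix.toEuclideanLin (Γ t)⁻¹ (θt t)) : ℝ) := by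
      simp only [hVf]
    have hexp0 : (0:ℝ) < Real.exp (-(2 * ε * m) * (t - tM)) := Real.exp_pos _
    have hM2 : (0:ℝ) ≤ 2 * Vf tM := by linarith
    have hpb : ‖pt t‖ ≤ Real.sqrt (2 * Vf tM)
        * Real.exp (-((2 * ε * m) / 2) * (t - tM)) := by
      refine expconv_sq_decay (norm_nonneg _) hM2 ?_
      rw [hVft] at hdec
      linarith only [hdec, hWt0, hA0, hB0, hC0]
    have hηb : ‖η t‖ ≤ Real.sqrt (2 * Vf tM)
        * Real.exp (-((2 * ε * m) / 2) * (t - tM)) := by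
      refine expconv_sq_decay (norm_nonneg _) hM2 ?_
      rw [hVft] at hdec
      linarith only [hdec, hWt0, hA0, hB0, hC0]
    have hrb : ‖r t‖ ≤ Real.sqrt (2 * Vf tM)
        * Real.exp (-((2 * ε * m) / 2) * (t - tM)) := by
      refine expconv_sq_decay (norm_nonneg _) hM2 ?_
      rw [hVft] at hdec
      linarith only [hdec, hWt0, hA0, hB0, hC0]
    have hθb : ‖θt t‖ ≤ Real.sqrt (2 * γhi * Vf tM)
        * Real.exp (-((2 * ε * m) / 2) * (t - tM)) := by
      refine expconv_sq_decay (norm_nonneg _) (by positivity) ?_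
      have h1 := (hquad t ht).1
      have h2 : ‖θt t‖ ^ 2 ≤ γhi
          * (inner ℝ (θt t) (Matrix.toEuclideanLin (Γ t)⁻¹ (θt t)) : ℝ) := by
        have := (div_le_iff₀ hγhi).1 h1
        linarith
      rw [hVft] at hdec
      linarith only [h2, mul_le_mul_of_nonneg_left hdec hγhi.le, mul_nonneg hγhi.le hA0,
        mul_nonneg hγhi.le hB0, mul_nonneg hγhi.le hC0]
    have hqb : ‖qt t‖ ≤ ‖r t‖ + α * ‖pt t‖ + ‖η t‖ := by
      rw [hqdef]
      calc ‖r t - α • pt t - η t‖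
          ≤ ‖r t - α • pt t‖ + ‖η t‖ := norm_sub_le _ _
        _ ≤ ‖r t‖ + ‖α • pt t‖ + ‖η t‖ := by linarith [norm_sub_le (r t) (α • pt t)]
        _ = ‖r t‖ + α * ‖pt t‖ + ‖η t‖ := by
            rw [norm_smul, Real.norm_eq_abs, abs_of_pos hα]
    have hs1 : (0:ℝ) ≤ Real.sqrt (2 * Vf tM) := Real.sqrt_nonneg _
    have hs2 : (0:ℝ) ≤ Real.sqrt (2 * γhi * Vf tM) := Real.sqrt_nonneg _
    have hexp1 : (0:ℝ) < Real.exp (-((2 * ε * m) / 2) * (t - tM)) := Real.exp_pos _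
    have hCs1 : Real.sqrt (2 * Vf tM) * Real.exp (-((2 * ε * m) / 2) * (t - tM))
        ≤ ((2 + α) * Real.sqrt (2 * Vf tM) + Real.sqrt (2 * γhi * Vf tM))
          * Real.exp (-((2 * ε * m) / 2) * (t - tM)) := by
      apply mul_le_mul_of_nonneg_right _ hexp1.le
      linarith only [hs1, hs2, mul_nonneg hα.le hs1]
    have hCs2 : Real.sqrt (2 * γhi * Vf tM) * Real.exp (-((2 * ε * m) / 2) * (t - tM))
        ≤ ((2 + α) * Real.sqrt (2 * Vf tM) + Real.sqrt (2 * γhi * Vf tM))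
          * Real.exp (-((2 * ε * m) / 2) * (t - tM)) := by
      apply mul_le_mul_of_nonneg_right _ hexp1.le
      linarith only [hs1, mul_nonneg hα.le hs1]
    refine ⟨le_trans hpb hCs1, ?_, le_trans hθb hCs2⟩
    have hq2 : ‖qt t‖ ≤ (2 + α)
        * (Real.sqrt (2 * Vf tM) * Real.exp (-((2 * ε * m) / 2) * (t - tM))) := by
      have h1 := mul_le_mul_of_nonneg_left hpb hα.le
      linarith only [h1, hηb, hrb, hqb]
    have hq3 : (2 + α)
        * (Real.sqrt (2 * Vf tM) * Real.exp (-((2 * ε * m) / 2) * (t - tM)))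
        ≤ ((2 + α) * Real.sqrt (2 * Vf tM) + Real.sqrt (2 * γhi * Vf tM))
          * Real.exp (-((2 * ε * m) / 2) * (t - tM)) := by
      linarith only [mul_nonneg hs2 hexp1.le]
    exact le_trans hq2 hq3
end
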